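/- arXiv:2303.10027 — 5 statements merged into one kernel-verified Lean document; each statement's English description precedes it below -/
import Mathlib

section
/- Let M be a non-singular integer m×m matrix and D ⊂ Z^m a finite digit set containing 0 such that Z^m ⊆ Fin_D(M). Then Fin_D(M) is closed under addition and subtraction. -/
open Matrix BigOperators

/-- `j`-th power (positive or negative) of a square matrix over a field. -/
noncomputable def mzpow {m : ℕ} (A : Matrix (Fin m) (Fin m) ℚ) (j : ℤ) :
    Matrix (Fin m) (Fin m) ℚ :=
  if 0 ≤ j then A ^ j.toNat else A⁻¹ ^ (-j).toNat

/-- Coordinatewise embedding of `ℤ^m` into `ℚ^m`. -/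
def castQ {m : ℕ} (v : Fin m → ℤ) : Fin m → ℚ := fun i => (v i : ℚ)

/-- The set `Fin_D(M)` of vectors with a finite `(M, D)`-representation. -/
noncomputable def FinRep {m : ℕ} (M : Matrix (Fin m) (Fin m) ℤ)
    (D : Finset (Fin m → ℤ)) : Set (Fin m → ℚ) :=
  { x | ∃ (I : Finset ℤ) (d : ℤ → Fin m → ℤ), (∀ j ∈ I, d j ∈ D) ∧
      x = ∑ j ∈ I, (mzpow (M.map (Int.cast : ℤ → ℚ)) j).mulVec (castQ (d j)) }

lemma mzpow_eq_zpow {m : ℕ} (A : Matrix (Fin m) (Fin m) ℚ) (j : ℤ) :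
    mzpow A j = A ^ j := by
  unfold mzpow
  split_ifs with h
  · rw [← zpow_natCast, Int.toNat_of_nonneg h]
  · rw [Matrix.inv_pow', ← Matrix.zpow_neg_natCast, Int.toNat_of_nonneg (by omega),
      neg_neg]

lemma map_pow_castQ {m : ℕ} (M : Matrix (Fin m) (Fin m) ℤ) (n : ℕ) :
    (M ^ n).map (Int.cast : ℤ → ℚ) = (M.map (Int.cast : ℤ → ℚ)) ^ n := by
  have h : (Int.cast : ℤ → ℚ) = ⇑(Int.castRingHom ℚ) := rfl
  rw [h, ← RingHom.mapMatrix_apply, ← RingHom.mapMatrix_apply, map_pow]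

lemma mulVec_sum' {m : ℕ} (A : Matrix (Fin m) (Fin m) ℚ) (s : Finset ℤ)
    (f : ℤ → Fin m → ℚ) : A.mulVec (∑ j ∈ s, f j) = ∑ j ∈ s, A.mulVec (f j) := by
  simpa only [Matrix.mulVecLin_apply] using map_sum A.mulVecLin f s

lemma castQ_add {m : ℕ} (a b : Fin m → ℤ) : castQ (a + b) = castQ a + castQ b := by
  funext i; simp [castQ]

lemma castQ_sub {m : ℕ} (a b : Fin m → ℤ) : castQ (a - b) = castQ a - castQ b := by
  funext i; simp [castQ]

lemma castQ_mulVec {m : ℕ} (A : Matrix (Fin m) (Fin m) ℤ) (v : Fin m → ℤ) :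
    castQ (A.mulVec v) = (A.map (Int.cast : ℤ → ℚ)).mulVec (castQ v) := by
  funext i
  simp [castQ, Matrix.mulVec, dotProduct, Matrix.map_apply]

/-- Shifting: multiplying an element of `FinRep` by an integer power of `M` stays in `FinRep`. -/
lemma finrep_shift {m : ℕ} (M : Matrix (Fin m) (Fin m) ℤ)
    (hQ : IsUnit (M.map (Int.cast : ℤ → ℚ)).det)
    (D : Finset (Fin m → ℤ)) (k : ℤ) {x : Fin m → ℚ} (hx : x ∈ FinRep M D) :
    ((M.map (Int.cast : ℤ → ℚ)) ^ k).mulVec x ∈ FinRep M D := by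
  set Q := M.map (Int.cast : ℤ → ℚ) with hQdef
  obtain ⟨I, d, hd, rfl⟩ := hx
  refine ⟨I.image (fun j => k + j), fun j => d (j - k), ?_, ?_⟩
  · intro j hj
    obtain ⟨j', hj', rfl⟩ := Finset.mem_image.mp hj
    simpa using hd j' hj'
  · rw [Finset.sum_image (by intro a _ b _ h; exact add_left_cancel h)]
    rw [mulVec_sum']
    refine Finset.sum_congr rfl fun j hj => ?_
    beta_reduce
    rw [add_sub_cancel_left, mzpow_eq_zpow, mzpow_eq_zpow, Matrix.mulVec_mulVec,
      ← Matrix.zpow_add hQ]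

/-- Every vector of the form `M^(-N) * z` with `z ∈ ℤ^m` lies in `FinRep`. -/
lemma finrep_of_negpow {m : ℕ} (M : Matrix (Fin m) (Fin m) ℤ)
    (hQ : IsUnit (M.map (Int.cast : ℤ → ℚ)).det)
    (D : Finset (Fin m → ℤ)) (hZ : ∀ v : Fin m → ℤ, castQ v ∈ FinRep M D)
    (N : ℕ) (z : Fin m → ℤ) :
    ((M.map (Int.cast : ℤ → ℚ)) ^ (-(N : ℤ))).mulVec (castQ z) ∈ FinRep M D :=
  finrep_shift M hQ D (-(N : ℤ)) (hZ z)

/-- Every element of `FinRep` has the form `M^(-N) * z` with `z ∈ ℤ^m`. -/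
lemma finrep_exists_negpow {m : ℕ} (M : Matrix (Fin m) (Fin m) ℤ)
    (hQ : IsUnit (M.map (Int.cast : ℤ → ℚ)).det)
    (D : Finset (Fin m → ℤ)) {x : Fin m → ℚ} (hx : x ∈ FinRep M D) :
    ∃ (N : ℕ) (z : Fin m → ℤ),
      x = ((M.map (Int.cast : ℤ → ℚ)) ^ (-(N : ℤ))).mulVec (castQ z) := by
  set Q := M.map (Int.cast : ℤ → ℚ) with hQdef
  obtain ⟨I, d, hd, rfl⟩ := hx
  set N : ℕ := I.sup fun j => (-j).toNat with hN
  have hjN : ∀ j ∈ I, -(N : ℤ) ≤ j := by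
    intro j hj
    have : (-j).toNat ≤ N := Finset.le_sup (f := fun j => (-j).toNat) hj
    omega
  refine ⟨N, ∑ j ∈ I, (M ^ (j + N).toNat).mulVec (d j), ?_⟩
  have hcast : castQ (∑ j ∈ I, (M ^ (j + N).toNat).mulVec (d j))
      = ∑ j ∈ I, (Q ^ (j + N).toNat).mulVec (castQ (d j)) := by
    have : ∀ (s : Finset ℤ) (f : ℤ → Fin m → ℤ),
        castQ (∑ j ∈ s, f j) = ∑ j ∈ s, castQ (f j) := by
      intro s f
      funext i
      simp [castQ, Finset.sum_apply]
    rw [this]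
    refine Finset.sum_congr rfl fun j hj => ?_
    rw [castQ_mulVec]
    congr 1
    simp [hQdef, map_pow_castQ]
  rw [hcast, mulVec_sum']
  refine Finset.sum_congr rfl fun j hj => ?_
  rw [mzpow_eq_zpow, Matrix.mulVec_mulVec, ← zpow_natCast Q, ← Matrix.zpow_add hQ]
  have hT : ((j + (N:ℤ)).toNat : ℤ) = j + N := Int.toNat_of_nonneg (by have := hjN j hj; omega)
  rw [hT, show -(N:ℤ) + (j + N) = j by ring]

theorem finrep_closed_add_sub {m : ℕ} (M : Matrix (Fin m) (Fin m) ℤ)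
    (hM : M.det ≠ 0) (D : Finset (Fin m → ℤ)) (h0 : (0 : Fin m → ℤ) ∈ D)
    (hZ : ∀ v : Fin m → ℤ, castQ v ∈ FinRep M D) :
    ∀ x ∈ FinRep M D, ∀ y ∈ FinRep M D,
      x + y ∈ FinRep M D ∧ x - y ∈ FinRep M D := by
  set Q := M.map (Int.cast : ℤ → ℚ) with hQdef
  have hQ : IsUnit Q.det := by
    have : Q = M.map (Int.castRingHom ℚ) := rfl
    rw [this, ← RingHom.mapMatrix_apply, ← RingHom.map_det]
    simp only [Int.coe_castRingHom, isUnit_iff_ne_zero]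
    exact_mod_cast fun h => hM (by exact_mod_cast h)
  intro x hx y hy
  obtain ⟨N₁, z₁, rfl⟩ := finrep_exists_negpow M hQ D hx
  obtain ⟨N₂, z₂, rfl⟩ := finrep_exists_negpow M hQ D hy
  have key : ∀ (w₁ w₂ : Fin m → ℤ),
      (Q ^ (-(N₁:ℤ))).mulVec (castQ w₁) = (Q ^ (-((N₁+N₂ : ℕ):ℤ))).mulVec (castQ ((M ^ N₂).mulVec w₁)) ∧
      (Q ^ (-(N₂:ℤ))).mulVec (castQ w₂) = (Q ^ (-((N₁+N₂ : ℕ):ℤ))).mulVec (castQ ((M ^ N₁).mulVec w₂)) := by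
    intro w₁ w₂
    constructor
    · rw [castQ_mulVec, Matrix.mulVec_mulVec]
      congr 1
      rw [show (M ^ N₂).map (Int.cast : ℤ → ℚ) = Q ^ N₂ by simp [hQdef, map_pow_castQ],
        ← zpow_natCast Q N₂, ← Matrix.zpow_add hQ]
      congr 1; push_cast; ring
    · rw [castQ_mulVec, Matrix.mulVec_mulVec]
      congr 1
      rw [show (M ^ N₁).map (Int.cast : ℤ → ℚ) = Q ^ N₁ by simp [hQdef, map_pow_castQ],
        ← zpow_natCast Q N₁, ← Matrix.zpow_add hQ]
      congr 1; push_cast; ring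
  obtain ⟨k1, k2⟩ := key z₁ z₂
  rw [k1, k2]
  constructor
  · rw [← Matrix.mulVec_add, ← castQ_add]
    exact finrep_of_negpow M hQ D hZ _ _
  · rw [← Matrix.mulVec_sub, ← castQ_sub]
    exact finrep_of_negpow M hQ D hZ _ _
end

section
/- Let f ∈ Z[X] be a polynomial all of whose complex roots have modulus different from 1. Then for any real t ≥ 1 there exists a non-zero polynomial g ∈ Z[X], g(X) = Σ_{l=0}^{p−1} c_l X^l, divisible by f, such that for some index L one has (1/t)·c_L > Σ_{l≠L} |c_l|. Moreover, if all roots of f have modulus > 1, then L = 0. -/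
open Polynomial BigOperators Finset

noncomputable def Complex.abs : AbsoluteValue ℂ ℝ := NormedField.toAbsoluteValue ℂ

@[simp] lemma Complex.abs_apply (z : ℂ) : Complex.abs z = ‖z‖ := rfl

lemma Complex.abs_intCast (n : ℤ) : Complex.abs (n : ℂ) = |(n : ℝ)| := by
  rw [Complex.abs_apply, norm_intCast]

noncomputable def pnorm (p : Polynomial ℂ) : ℝ := ∑ j ∈ p.support, Complex.abs (p.coeff j)

lemma pnorm_nonneg (p : Polynomial ℂ) : 0 ≤ pnorm p :=
  Finset.sum_nonneg fun _ _ => AbsoluteValue.nonneg _ _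

lemma sum_abs_coeff_le (p : Polynomial ℂ) (u : Finset ℕ) :
    ∑ j ∈ u, Complex.abs (p.coeff j) ≤ pnorm p := by
  have h1 : ∑ j ∈ u, Complex.abs (p.coeff j) = ∑ j ∈ u ∩ p.support, Complex.abs (p.coeff j) := by
    refine (Finset.sum_subset Finset.inter_subset_left fun x hx hnx => ?_).symm
    have : x ∉ p.support := fun hs => hnx (Finset.mem_inter.2 ⟨hx, hs⟩)
    simp [Polynomial.notMem_support_iff.1 this]
  rw [h1, pnorm]
  exact Finset.sum_le_sum_of_subset_of_nonneg Finset.inter_subset_right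
    (fun _ _ _ => AbsoluteValue.nonneg _ _)

lemma sum_abs_coeff_comp_le (p : Polynomial ℂ) (u : Finset ℕ) (e : ℕ → ℕ)
    (he : Set.InjOn e u) :
    ∑ j ∈ u, Complex.abs (p.coeff (e j)) ≤ pnorm p := by
  calc ∑ j ∈ u, Complex.abs (p.coeff (e j))
      = ∑ i ∈ u.image e, Complex.abs (p.coeff i) :=
        (Finset.sum_image (f := fun i => Complex.abs (p.coeff i)) (fun x hx y hy h => he hx hy h)).symm
    _ ≤ pnorm p := sum_abs_coeff_le p _

lemma pnorm_add_le (p q : Polynomial ℂ) : pnorm (p + q) ≤ pnorm p + pnorm q := by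
  have h : pnorm (p + q) ≤ ∑ j ∈ (p + q).support, (Complex.abs (p.coeff j) + Complex.abs (q.coeff j)) := by
    refine Finset.sum_le_sum fun j _ => ?_
    rw [Polynomial.coeff_add]
    exact AbsoluteValue.add_le _ _ _
  rw [Finset.sum_add_distrib] at h
  exact h.trans (add_le_add (sum_abs_coeff_le p _) (sum_abs_coeff_le q _))

lemma pnorm_neg (p : Polynomial ℂ) : pnorm (-p) = pnorm p := by
  unfold pnorm
  rw [Polynomial.support_neg]
  exact Finset.sum_congr rfl fun j _ => by simp

lemma pnorm_sub_le (p q : Polynomial ℂ) : pnorm (p - q) ≤ pnorm p + pnorm q := by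
  rw [sub_eq_add_neg]
  simpa [pnorm_neg] using pnorm_add_le p (-q)

lemma pnorm_C_mul_le (a : ℂ) (p : Polynomial ℂ) :
    pnorm (Polynomial.C a * p) ≤ Complex.abs a * pnorm p := by
  have h : pnorm (Polynomial.C a * p) = ∑ j ∈ (Polynomial.C a * p).support, Complex.abs a * Complex.abs (p.coeff j) := by
    refine Finset.sum_congr rfl fun j _ => ?_
    rw [Polynomial.coeff_C_mul, map_mul]
  rw [h, ← Finset.mul_sum]
  exact mul_le_mul_of_nonneg_left (sum_abs_coeff_le p _) (AbsoluteValue.nonneg _ _)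

lemma pnorm_C (a : ℂ) : pnorm (Polynomial.C a) = Complex.abs a := by
  by_cases h : a = 0
  · simp [h, pnorm]
  · unfold pnorm
    rw [Polynomial.support_C h]
    simp

lemma pnorm_one : pnorm 1 = 1 := by
  simpa using pnorm_C 1

lemma pnorm_X_pow_mul_le (r : ℕ) (p : Polynomial ℂ) : pnorm (X ^ r * p) ≤ pnorm p := by
  have key : ∀ j ∈ (X ^ r * p).support, Complex.abs ((X ^ r * p).coeff j) = Complex.abs (p.coeff (j - r)) := by
    intro j hj
    have hj' := Polynomial.mem_support_iff.1 hj
    rw [mul_comm, Polynomial.coeff_mul_X_pow'] at hj' ⊢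
    by_cases hr : r ≤ j
    · rw [if_pos hr]
    · exact (hj' (if_neg hr)).elim
  have hle : ∀ j ∈ (X ^ r * p).support, r ≤ j := by
    intro j hj
    have hj' := Polynomial.mem_support_iff.1 hj
    rw [mul_comm, Polynomial.coeff_mul_X_pow'] at hj'
    by_contra hr
    exact hj' (if_neg hr)
  calc pnorm (X ^ r * p) = ∑ j ∈ (X ^ r * p).support, Complex.abs (p.coeff (j - r)) :=
        Finset.sum_congr rfl key
    _ ≤ pnorm p := by
        refine sum_abs_coeff_comp_le p _ (· - r) ?_
        intro x hx y hy hxy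
        have hx' := hle x hx
        have hy' := hle y hy
        have hxy' : x - r = y - r := hxy
        omega

noncomputable def Pr (s : Multiset ℂ) : Polynomial ℂ := (s.map (fun a => X - C a)).prod

lemma Pr_cons (a : ℂ) (s : Multiset ℂ) : Pr (a ::ₘ s) = (X - C a) * Pr s := by
  unfold Pr
  rw [Multiset.map_cons, Multiset.prod_cons]

lemma Pr_monic (s : Multiset ℂ) : (Pr s).Monic := by
  exact monic_multiset_prod_of_monic s _ (fun a _ => monic_X_sub_C a)

lemma Pr_natDegree (s : Multiset ℂ) : (Pr s).natDegree = Multiset.card s := by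
  induction s using Multiset.induction_on with
  | empty => simp [Pr]
  | cons a s ih =>
    rw [Pr_cons, Polynomial.natDegree_mul (X_sub_C_ne_zero a) (Pr_monic s).ne_zero,
      natDegree_X_sub_C, ih, Multiset.card_cons]
    omega

lemma prodpos (s : Multiset ℂ) : (0:ℝ) < (s.map (fun a => 1 + Complex.abs a)).prod := by
  apply Multiset.prod_pos
  intro x hx
  rcases Multiset.mem_map.1 hx with ⟨b, _, rfl⟩
  exact add_pos_of_pos_of_nonneg one_pos (AbsoluteValue.nonneg _ _)

lemma pnorm_linear_mul_le (a : ℂ) (p : Polynomial ℂ) :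
    pnorm ((X - C a) * p) ≤ (1 + Complex.abs a) * pnorm p := by
  have h1 : (X - C a) * p = X ^ 1 * p - C a * p := by ring
  rw [h1]
  refine (pnorm_sub_le _ _).trans ?_
  have := pnorm_X_pow_mul_le 1 p
  have := pnorm_C_mul_le a p
  nlinarith [pnorm_nonneg p]

lemma pnorm_Pr_mul_le (s : Multiset ℂ) (p : Polynomial ℂ) :
    pnorm (Pr s * p) ≤ (s.map (fun a => 1 + Complex.abs a)).prod * pnorm p := by
  induction s using Multiset.induction_on with
  | empty => simp [Pr]
  | cons a s ih =>
    rw [Pr_cons, mul_assoc, Multiset.map_cons, Multiset.prod_cons]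
    refine (pnorm_linear_mul_le a (Pr s * p)).trans ?_
    rw [mul_assoc]
    refine mul_le_mul_of_nonneg_left ih (by linarith [AbsoluteValue.nonneg Complex.abs a])

lemma pnorm_Pr_le (s : Multiset ℂ) :
    pnorm (Pr s) ≤ (s.map (fun a => 1 + Complex.abs a)).prod := by
  simpa [pnorm_one] using pnorm_Pr_mul_le s 1

lemma Pr_coeff_zero (s : Multiset ℂ) : (Pr s).coeff 0 = (s.map (fun a => -a)).prod := by
  induction s using Multiset.induction_on with
  | empty => simp [Pr]
  | cons a s ih =>
    rw [Pr_cons, Polynomial.mul_coeff_zero, ih, Multiset.map_cons, Multiset.prod_cons]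
    simp

lemma Pr_coeff_zero_abs (s : Multiset ℂ) :
    Complex.abs ((Pr s).coeff 0) = (s.map (fun a => Complex.abs a)).prod := by
  rw [Pr_coeff_zero]
  induction s using Multiset.induction_on with
  | empty => simp
  | cons a s ih =>
    simp only [Multiset.map_cons, Multiset.prod_cons, map_mul, ih]
    simp

lemma pnorm_Pr_sub_X_pow (s : Multiset ℂ) :
    pnorm (Pr s - X ^ (Multiset.card s)) ≤ (s.map (fun a => 1 + Complex.abs a)).prod - 1 := by
  induction s using Multiset.induction_on with
  | empty => simp [Pr, pnorm]
  | cons a s ih =>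
    have key : Pr (a ::ₘ s) - X ^ (Multiset.card (a ::ₘ s))
        = (X - C a) * (Pr s - X ^ (Multiset.card s)) - C a * X ^ (Multiset.card s) := by
      rw [Pr_cons, Multiset.card_cons, pow_succ]
      ring
    rw [key]
    refine (pnorm_sub_le _ _).trans ?_
    have h1 := (pnorm_linear_mul_le a (Pr s - X ^ (Multiset.card s))).trans
      (mul_le_mul_of_nonneg_left ih (by linarith [AbsoluteValue.nonneg Complex.abs a]))
    have h2 : pnorm (C a * X ^ (Multiset.card s)) ≤ Complex.abs a := by
      refine (pnorm_C_mul_le a _).trans ?_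
      have h3 : pnorm ((X:Polynomial ℂ) ^ (Multiset.card s)) ≤ 1 := by
        have := pnorm_X_pow_mul_le (Multiset.card s) 1
        rwa [mul_one, pnorm_one] at this
      nlinarith [AbsoluteValue.nonneg Complex.abs a]
    rw [Multiset.map_cons, Multiset.prod_cons]
    nlinarith [prodpos s, AbsoluteValue.nonneg Complex.abs a]

lemma pnorm_Pr_sub_C (s : Multiset ℂ) :
    pnorm (Pr s - C ((Pr s).coeff 0)) ≤
      (s.map (fun a => 1 + Complex.abs a)).prod - (s.map (fun a => Complex.abs a)).prod := by
  induction s using Multiset.induction_on with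
  | empty => simp [Pr, pnorm]
  | cons a s ih =>
    have hc0 : (Pr (a ::ₘ s)).coeff 0 = -a * (Pr s).coeff 0 := by
      rw [Pr_cons, Polynomial.mul_coeff_zero]
      simp [mul_comm]
    have key : Pr (a ::ₘ s) - C ((Pr (a ::ₘ s)).coeff 0)
        = (X - C a) * (Pr s - C ((Pr s).coeff 0)) + X * C ((Pr s).coeff 0) := by
      rw [hc0, Pr_cons, map_mul, map_neg]
      ring
    rw [key]
    refine (pnorm_add_le _ _).trans ?_
    have h1 := (pnorm_linear_mul_le a (Pr s - C ((Pr s).coeff 0))).trans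
      (mul_le_mul_of_nonneg_left ih (by linarith [AbsoluteValue.nonneg Complex.abs a]))
    have h2 : pnorm (X * C ((Pr s).coeff 0)) ≤ (s.map (fun a => Complex.abs a)).prod := by
      have h3 : pnorm (X * C ((Pr s).coeff 0)) ≤ pnorm (C ((Pr s).coeff 0)) := by
        simpa using pnorm_X_pow_mul_le 1 (C ((Pr s).coeff 0))
      rw [pnorm_C, Pr_coeff_zero_abs s] at h3
      exact h3
    rw [Multiset.map_cons, Multiset.prod_cons, Multiset.map_cons, Multiset.prod_cons]
    have hQ : (0:ℝ) ≤ (s.map (fun a => Complex.abs a)).prod := by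
      apply Multiset.prod_nonneg
      intro x hx
      rcases Multiset.mem_map.1 hx with ⟨b, _, rfl⟩
      exact AbsoluteValue.nonneg _ _
    nlinarith [prodpos s, AbsoluteValue.nonneg Complex.abs a]

lemma coeff_comp_neg_X (p : Polynomial ℤ) (n : ℕ) :
    (p.comp (-X)).coeff n = (-1)^n * p.coeff n := by
  induction p using Polynomial.induction_on' with
  | add p q hp hq => simp [Polynomial.add_comp, hp, hq, mul_add]
  | monomial d a =>
    rw [Polynomial.monomial_comp, neg_pow,
      show ((-1 : Polynomial ℤ))^d = C ((-1:ℤ)^d) by rw [map_pow, map_neg, map_one]]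
    simp only [Polynomial.coeff_C_mul, Polynomial.coeff_mul_C, Polynomial.coeff_monomial,
      Polynomial.coeff_X_pow, mul_ite, mul_zero, mul_one,
      show C a * (C ((-1:ℤ)^d) * X ^ d) = C (a * (-1:ℤ)^d) * X ^ d by rw [map_mul]; ring]
    by_cases h : n = d
    · subst h; simp; ring_nf
    · rw [if_neg h, if_neg (fun hh => h hh.symm)]

lemma even_coeffs (p : Polynomial ℤ) (i : ℕ) (hi : ¬ 2 ∣ i) :
    (p * p.comp (-X)).coeff i = 0 := by
  have hq : (p * p.comp (-X)).comp (-X) = p * p.comp (-X) := by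
    rw [Polynomial.mul_comp, Polynomial.comp_neg_X_comp_neg_X, mul_comm]
  have h := coeff_comp_neg_X (p * p.comp (-X)) i
  rw [hq] at h
  have hodd : (-1:ℤ)^i = -1 := Odd.neg_one_pow (Nat.odd_iff.2 (Nat.two_dvd_ne_zero.1 hi))
  rw [hodd] at h
  linarith

lemma expand_contract_even (p : Polynomial ℤ) :
    Polynomial.expand ℤ 2 (Polynomial.contract 2 (p * p.comp (-X))) = p * p.comp (-X) := by
  ext n
  rw [Polynomial.coeff_expand (by norm_num : (0:ℕ) < 2), Polynomial.coeff_contract (two_ne_zero)]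
  split_ifs with h
  · rw [Nat.div_mul_cancel h]
  · exact (even_coeffs p n h).symm

noncomputable def Fs (f : Polynomial ℤ) : ℕ → Polynomial ℤ
  | 0 => f
  | (k+1) => Polynomial.contract 2 (Fs f k * (Fs f k).comp (-X))

lemma Fs_dvd (f : Polynomial ℤ) (k : ℕ) : f ∣ Polynomial.expand ℤ (2^k) (Fs f k) := by
  induction k with
  | zero => simp [Fs]
  | succ k ih =>
    have h1 : Polynomial.expand ℤ (2^(k+1)) (Fs f (k+1))
        = Polynomial.expand ℤ (2^k) (Polynomial.expand ℤ 2 (Fs f (k+1))) := by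
      rw [show (2:ℕ)^(k+1) = 2^k * 2 by ring, Polynomial.expand_mul]
    rw [h1, show Fs f (k+1) = Polynomial.contract 2 (Fs f k * (Fs f k).comp (-X)) from rfl,
      expand_contract_even, map_mul]
    exact ih.trans (Dvd.intro _ rfl)

lemma expand_Pr (ν : Multiset ℂ) :
    Polynomial.expand ℂ 2 (Pr (ν.map (fun a => a^2)))
      = (ν.map (fun a => X^2 - C (a^2))).prod := by
  unfold Pr
  rw [map_multiset_prod, Multiset.map_map, Multiset.map_map]
  congr 1
  apply Multiset.map_congr rfl
  intro a _
  simp [Polynomial.expand_X]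

lemma Pr_mul_comp_neg (ν : Multiset ℂ) :
    Pr ν * (Pr ν).comp (-X)
      = C ((-1:ℂ)^(Multiset.card ν)) * Polynomial.expand ℂ 2 (Pr (ν.map (fun a => a^2))) := by
  rw [expand_Pr]
  unfold Pr
  rw [Polynomial.multiset_prod_comp, Multiset.map_map]
  simp only [Function.comp_def]
  have h1 : ν.map (fun a => (X - C a).comp (-X)) = ν.map (fun a => (-1) * (X + C a)) :=
    Multiset.map_congr rfl (fun a _ => by
      simp [Polynomial.sub_comp]
      ring)
  rw [h1, Multiset.prod_map_mul]
  have h2 : (ν.map (fun _ => (-1 : Polynomial ℂ))).prod = C ((-1:ℂ)^(Multiset.card ν)) := by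
    rw [Multiset.map_const', Multiset.prod_replicate]
    simp [map_pow]
  rw [h2]
  rw [show (ν.map (fun a => X - C a)).prod * (C ((-1:ℂ)^(Multiset.card ν)) * (ν.map (fun a => X + C a)).prod)
      = C ((-1:ℂ)^(Multiset.card ν)) * ((ν.map (fun a => X - C a)).prod * (ν.map (fun a => X + C a)).prod) by ring]
  congr 1
  rw [← Multiset.prod_map_mul]
  congr 1
  apply Multiset.map_congr rfl
  intro a _
  rw [show (X - C a) * (X + C a) = X^2 - C a * C a by ring, ← Polynomial.C_mul, ← sq]

lemma Fs_map_form (f : Polynomial ℤ) (hf : f ≠ 0) (k : ℕ) :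
    ∃ γ : ℂ, γ ≠ 0 ∧ (Fs f k).map (Int.castRingHom ℂ)
      = C γ * Pr (((f.map (Int.castRingHom ℂ)).roots).map (fun a => a^(2^k))) := by
  set F := f.map (Int.castRingHom ℂ) with hF
  have hFne : F ≠ 0 := by
    rw [hF]
    exact (Polynomial.map_ne_zero_iff (RingHom.injective_int _)).2 hf
  induction k with
  | zero =>
    refine ⟨F.leadingCoeff, Polynomial.leadingCoeff_ne_zero.2 hFne, ?_⟩
    have hsplit : Splits F := IsAlgClosed.splits F
    have h1 := hsplit.eq_prod_roots
    have h2 : F.roots.map (fun a => a^(2^0)) = F.roots := by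
      simp
    rw [show Fs f 0 = f from rfl, ← hF, h2]
    exact h1
  | succ k ih =>
    obtain ⟨γ, hγ, hΦ⟩ := ih
    refine ⟨γ^2 * (-1)^(Multiset.card (F.roots.map (fun a => a^(2^k)))), by
      simp [hγ], ?_⟩
    set ν := F.roots.map (fun a => a^(2^k)) with hν
    have key : Polynomial.expand ℂ 2 ((Fs f (k+1)).map (Int.castRingHom ℂ))
        = (C γ * Pr ν) * ((C γ * Pr ν).comp (-X)) := by
      rw [← hΦ]
      rw [show Fs f (k+1) = Polynomial.contract 2 (Fs f k * (Fs f k).comp (-X)) from rfl]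
      rw [← Polynomial.map_expand, expand_contract_even, Polynomial.map_mul,
        Polynomial.map_comp]
      simp
    have key2 : (C γ * Pr ν) * ((C γ * Pr ν).comp (-X))
        = Polynomial.expand ℂ 2 (C (γ^2 * (-1)^(Multiset.card ν)) * Pr (ν.map (fun a => a^2))) := by
      rw [Polynomial.mul_comp, Polynomial.C_comp]
      rw [show C γ * Pr ν * (C γ * (Pr ν).comp (-X))
          = C γ * C γ * (Pr ν * (Pr ν).comp (-X)) by ring]
      rw [Pr_mul_comp_neg]
      rw [map_mul (Polynomial.expand ℂ 2), Polynomial.expand_C]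
      rw [← Polynomial.C_mul, ← mul_assoc, ← Polynomial.C_mul]
      congr 2
      ring
    have := Polynomial.expand_injective (by norm_num : (0:ℕ) < 2) (key.trans key2)
    rw [this]
    congr 2
    rw [hν, Multiset.map_map]
    apply Multiset.map_congr rfl
    intro a _
    simp only [Function.comp_apply]
    rw [← pow_mul, pow_succ]

lemma Fs_natDegree (f : Polynomial ℤ) (hf : f ≠ 0) (k : ℕ) :
    (Fs f k).natDegree = f.natDegree := by
  obtain ⟨γ, hγ, hΦ⟩ := Fs_map_form f hf k
  have h1 : (Fs f k).natDegree = ((Fs f k).map (Int.castRingHom ℂ)).natDegree :=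
    (Polynomial.natDegree_map_eq_of_injective (RingHom.injective_int _) _).symm
  have h2 : f.natDegree = (f.map (Int.castRingHom ℂ)).natDegree :=
    (Polynomial.natDegree_map_eq_of_injective (RingHom.injective_int _) _).symm
  have hFne : f.map (Int.castRingHom ℂ) ≠ 0 :=
    (Polynomial.map_ne_zero_iff (RingHom.injective_int _)).2 hf
  rw [h1, hΦ, Polynomial.natDegree_C_mul hγ, Pr_natDegree, Multiset.card_map, h2]
  exact (Polynomial.splits_iff_card_roots.1 (IsAlgClosed.splits _))

lemma tendsto_prod_one (s : Multiset ℝ) (h : ∀ a ∈ s, 0 ≤ a ∧ a < 1) :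
    Filter.Tendsto (fun k : ℕ => (s.map (fun a => 1 + a^(2^k))).prod)
      Filter.atTop (nhds 1) := by
  induction s using Multiset.induction_on with
  | empty => simp only [Multiset.map_zero, Multiset.prod_zero]; exact tendsto_const_nhds
  | cons a s ih =>
    have ha := h a (Multiset.mem_cons_self a s)
    have hs := fun b hb => h b (Multiset.mem_cons_of_mem hb)
    have h1 : Filter.Tendsto (fun k : ℕ => a^(2^k)) Filter.atTop (nhds 0) := by
      have hp : Filter.Tendsto (fun k : ℕ => (2:ℕ)^k) Filter.atTop Filter.atTop :=
        tendsto_pow_atTop_atTop_of_one_lt (by norm_num)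
      exact (tendsto_pow_atTop_nhds_zero_of_lt_one ha.1 ha.2).comp hp
    have h2 : Filter.Tendsto (fun k : ℕ => 1 + a^(2^k)) Filter.atTop (nhds 1) := by
      have := h1.const_add 1
      simpa using this
    have h3 := h2.mul (ih hs)
    simp only [Multiset.map_cons, Multiset.prod_cons]
    simpa using h3

lemma Pr_add (s t : Multiset ℂ) : Pr (s + t) = Pr s * Pr t := by
  unfold Pr
  rw [Multiset.map_add, Multiset.prod_add]

lemma one_le_mprod (s : Multiset ℝ) (h : ∀ x ∈ s, 1 ≤ x) : 1 ≤ s.prod := by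
  induction s using Multiset.induction_on with
  | empty => simp
  | cons a s ih =>
    rw [Multiset.prod_cons]
    have ha := h a (Multiset.mem_cons_self a s)
    have hs := ih (fun b hb => h b (Multiset.mem_cons_of_mem hb))
    nlinarith

set_option maxHeartbeats 1000000 in
theorem dominant_coefficient_multiple (f : Polynomial ℤ) (hf : f ≠ 0)
    (hroots : ∀ z : ℂ, (f.map (Int.castRingHom ℂ)).IsRoot z → ‖z‖ ≠ 1) :
    ∀ t : ℝ, 1 ≤ t →
      ∃ (g : Polynomial ℤ) (L : ℕ), g ≠ 0 ∧ f ∣ g ∧ L ≤ g.natDegree ∧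
        (1 / t) * (g.coeff L : ℝ)
          > ∑ l ∈ (Finset.range (g.natDegree + 1)).erase L, |(g.coeff l : ℝ)| ∧
        ((∀ z : ℂ, (f.map (Int.castRingHom ℂ)).IsRoot z → 1 < ‖z‖) → L = 0) := by
  intro t ht
  have ht0 : 0 < t := lt_of_lt_of_le one_pos ht
  set F := f.map (Int.castRingHom ℂ) with hF
  have hFne : F ≠ 0 := (Polynomial.map_ne_zero_iff (RingHom.injective_int _)).2 hf
  set μ := F.roots with hμ
  set μin := μ.filter (fun a => Complex.abs a < 1) with hμin
  set μout := μ.filter (fun a => ¬ Complex.abs a < 1) with hμout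
  have hsplitμ : μin + μout = μ := Multiset.filter_add_not _ μ
  have hin1 : ∀ a ∈ μin, Complex.abs a < 1 := fun a ha => (Multiset.mem_filter.1 ha).2
  have hout1 : ∀ a ∈ μout, 1 < Complex.abs a := by
    intro a ha
    have h1 := (Multiset.mem_filter.1 ha).2
    have h2 : a ∈ μ := (Multiset.mem_filter.1 ha).1
    have h3 : F.IsRoot a := (Polynomial.mem_roots'.1 h2).2
    exact lt_of_le_of_ne (not_lt.1 h1) (Ne.symm (hroots a h3))
  -- real data
  set n := f.natDegree with hn
  have hndeg : F.natDegree = n := Polynomial.natDegree_map_eq_of_injective (RingHom.injective_int _) f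
  have hcardμ : Multiset.card μ = n := by
    have h1 : Multiset.card F.roots = F.natDegree :=
      Polynomial.splits_iff_card_roots.1 (IsAlgClosed.splits F)
    rw [hμ, h1, hndeg]
  set r := Multiset.card μin with hr
  have hrn : r ≤ n := by
    rw [hr, ← hcardμ]
    exact Multiset.card_le_card (Multiset.filter_le _ μ)
  set u : ℕ → ℝ := fun k => ((μin.map Complex.abs).map (fun x => 1 + x^(2^k))).prod with hu
  set v : ℕ → ℝ := fun k => ((μout.map Complex.abs).map (fun x => 1 + x^(2^k))).prod with hv
  set W : ℕ → ℝ := fun k => ((μout.map Complex.abs).map (fun x => x^(2^k))).prod with hW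
  set vw : ℕ → ℝ := fun k => ((μout.map (fun a => (Complex.abs a)⁻¹)).map (fun x => 1 + x^(2^k))).prod with hvw
  have hW0 : ∀ k, 0 < W k := by
    intro k
    apply Multiset.prod_pos
    intro x hx
    rcases Multiset.mem_map.1 hx with ⟨y, hy, rfl⟩
    rcases Multiset.mem_map.1 hy with ⟨a, ha, rfl⟩
    have := hout1 a ha
    positivity
  have hW1 : ∀ k, 1 ≤ W k := by
    intro k
    apply one_le_mprod
    intro x hx
    rcases Multiset.mem_map.1 hx with ⟨y, hy, rfl⟩
    rcases Multiset.mem_map.1 hy with ⟨a, ha, rfl⟩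
    exact one_le_pow₀ (hout1 a ha).le
  have hu1 : ∀ k, 1 ≤ u k := by
    intro k
    apply one_le_mprod
    intro x hx
    rcases Multiset.mem_map.1 hx with ⟨y, hy, rfl⟩
    rcases Multiset.mem_map.1 hy with ⟨a, ha, rfl⟩
    nlinarith [pow_nonneg (AbsoluteValue.nonneg Complex.abs a) (2^k)]
  have hvw1 : ∀ k, 1 ≤ vw k := by
    intro k
    apply one_le_mprod
    intro x hx
    rcases Multiset.mem_map.1 hx with ⟨y, hy, rfl⟩
    rcases Multiset.mem_map.1 hy with ⟨a, ha, rfl⟩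
    have h0 : (0:ℝ) ≤ (Complex.abs a)⁻¹ := inv_nonneg.2 (AbsoluteValue.nonneg _ _)
    nlinarith [pow_nonneg h0 (2^k)]
  have hvWvw : ∀ k, v k = W k * vw k := by
    intro k
    rw [hv, hW, hvw]
    simp only [Multiset.map_map]
    rw [← Multiset.prod_map_mul]
    congr 1
    apply Multiset.map_congr rfl
    intro a ha
    have hane : Complex.abs a ≠ 0 := by
      have := hout1 a ha
      positivity
    simp only [Function.comp_apply]
    rw [mul_add, mul_one, ← mul_pow, mul_inv_cancel₀ hane, one_pow]
    ring
  have hv0 : ∀ k, 0 < v k := by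
    intro k
    rw [hvWvw k]
    have := hW0 k
    have := hvw1 k
    nlinarith
  have hvW : ∀ k, W k ≤ v k := by
    intro k
    rw [hvWvw k]
    have := hW0 k
    have := hvw1 k
    nlinarith
  -- tendsto
  have hu_t : Filter.Tendsto u Filter.atTop (nhds 1) := by
    apply tendsto_prod_one
    intro x hx
    rcases Multiset.mem_map.1 hx with ⟨a, ha, rfl⟩
    exact ⟨AbsoluteValue.nonneg _ _, hin1 a ha⟩
  have hvw_t : Filter.Tendsto vw Filter.atTop (nhds 1) := by
    apply tendsto_prod_one
    intro x hx
    rcases Multiset.mem_map.1 hx with ⟨a, ha, rfl⟩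
    refine ⟨inv_nonneg.2 (AbsoluteValue.nonneg _ _), ?_⟩
    exact inv_lt_one_of_one_lt₀ (hout1 a ha)
  have hδ0 : Filter.Tendsto (fun k => (vw k - 1) + (u k - 1) * vw k) Filter.atTop (nhds 0) := by
    have h1 := (hvw_t.sub (tendsto_const_nhds (x := (1:ℝ)))).add
      ((hu_t.sub (tendsto_const_nhds (x := (1:ℝ)))).mul hvw_t)
    simpa using h1
  have hδ_t : Filter.Tendsto (fun k => (t+1) * ((vw k - 1) + (u k - 1) * vw k))
      Filter.atTop (nhds 0) := by
    have h2 : Filter.Tendsto (fun k => (t+1) * ((vw k - 1) + (u k - 1) * vw k))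
        Filter.atTop (nhds ((t+1) * 0)) := tendsto_const_nhds.mul hδ0
    simpa using h2
  have hev : ∀ᶠ k in Filter.atTop, (t+1) * ((vw k - 1) + (u k - 1) * vw k) < 1 :=
    hδ_t.eventually_lt_const one_pos
  obtain ⟨k, hk⟩ := hev.exists
  -- fix k
  set q := 2^k with hq
  have hq0 : 0 < q := pow_pos (by norm_num) k
  set η := (v k - W k) + (u k - 1) * v k with hη
  have hη0 : 0 ≤ η := by
    have := hvW k
    have := hu1 k
    have := hv0 k
    nlinarith
  have hηW : (t+1) * η < W k := by
    have heq : η = W k * ((vw k - 1) + (u k - 1) * vw k) := by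
      rw [hη, hvWvw k]
      ring
    calc (t+1) * η = W k * ((t+1) * ((vw k - 1) + (u k - 1) * vw k)) := by rw [heq]; ring
      _ < W k * 1 := by
          apply mul_lt_mul_of_pos_left hk (hW0 k)
      _ = W k := mul_one _
  -- algebraic data at k
  obtain ⟨γ, hγ, hΦ⟩ := Fs_map_form f hf k
  rw [← hF, ← hμ, ← hq] at hΦ
  set ν := μ.map (fun a => a^q) with hν
  set νin := μin.map (fun a => a^q) with hνin
  set νout := μout.map (fun a => a^q) with hνout
  have hνsplit : νin + νout = ν := by
    rw [hνin, hνout, hν, ← hsplitμ, Multiset.map_add]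
  have hPrν : Pr ν = Pr νin * Pr νout := by rw [← hνsplit, Pr_add]
  have hcardin : Multiset.card νin = r := by rw [hνin, Multiset.card_map]
  -- identifications of real products
  have idu : ((νin.map (fun a => 1 + Complex.abs a)).prod) = u k := by
    rw [hνin]
    simp only [hu, Multiset.map_map]
    congr 1
    apply Multiset.map_congr rfl
    intro a _
    simp only [Function.comp_apply, map_pow, hq]
  have idv : ((νout.map (fun a => 1 + Complex.abs a)).prod) = v k := by
    rw [hνout]
    simp only [hv, Multiset.map_map]
    congr 1
    apply Multiset.map_congr rfl
    intro a _
    simp only [Function.comp_apply, map_pow, hq]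
  have idW : ((νout.map (fun a => Complex.abs a)).prod) = W k := by
    rw [hνout]
    simp only [hW, Multiset.map_map]
    congr 1
    apply Multiset.map_congr rfl
    intro a _
    simp only [Function.comp_apply, map_pow, hq]
  set P := Pr ν with hP
  set b := (Pr νout).coeff 0 with hb
  have habs_b : Complex.abs b = W k := by
    rw [hb, Pr_coeff_zero_abs, idW]
  set E := P - X^r * C b with hE
  have hEnorm : pnorm E ≤ η := by
    have hdecomp : E = X^r * (Pr νout - C b) + (Pr νin - X^r) * Pr νout := by
      rw [hE, hPrν]
      ring
    rw [hdecomp]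
    refine (pnorm_add_le _ _).trans ?_
    have h1 : pnorm (X^r * (Pr νout - C b)) ≤ v k - W k := by
      refine (pnorm_X_pow_mul_le r _).trans ?_
      have := pnorm_Pr_sub_C νout
      rwa [idv, idW, ← hb] at this
    have h2 : pnorm ((Pr νin - X^r) * Pr νout) ≤ (u k - 1) * v k := by
      rw [mul_comm]
      refine (pnorm_Pr_mul_le νout _).trans ?_
      rw [idv]
      have h3 : pnorm (Pr νin - X^r) ≤ u k - 1 := by
        have := pnorm_Pr_sub_X_pow νin
        rwa [idu, hcardin] at this
      have := hv0 k
      rw [mul_comm]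
      exact mul_le_mul_of_nonneg_right h3 (le_of_lt this) |>.trans (le_of_eq (by ring))
    linarith
  -- coefficients
  set c : ℕ → ℤ := fun j => (Fs f k).coeff j with hc
  have hcast : ∀ j, ((c j : ℂ)) = γ * P.coeff j := by
    intro j
    have h1 : ((Fs f k).map (Int.castRingHom ℂ)).coeff j = ((c j : ℂ)) := by
      rw [Polynomial.coeff_map]
      rfl
    rw [← h1, hΦ, Polynomial.coeff_C_mul]
  have habs_c : ∀ j, |(c j : ℝ)| = Complex.abs γ * Complex.abs (P.coeff j) := by
    intro j
    rw [← Complex.abs_intCast, hcast j, map_mul]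
  have hXrCb : ∀ j, (X^r * C b : Polynomial ℂ).coeff j = if j = r then b else 0 := by
    intro j
    rw [mul_comm, Polynomial.coeff_C_mul, Polynomial.coeff_X_pow]
    split_ifs <;> simp
  have hPE : ∀ j, j ≠ r → P.coeff j = E.coeff j := by
    intro j hj
    rw [hE, Polynomial.coeff_sub, hXrCb j, if_neg hj, sub_zero]
  have hEcoeff_le : ∀ j, Complex.abs (E.coeff j) ≤ pnorm E := by
    intro j
    have := sum_abs_coeff_le E {j}
    simpa using this
  have hPr_low : W k - η ≤ Complex.abs (P.coeff r) := by
    have h1 : b = P.coeff r - E.coeff r := by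
      rw [hE, Polynomial.coeff_sub, hXrCb r, if_pos rfl]
      ring
    have h2 : Complex.abs b ≤ Complex.abs (P.coeff r) + Complex.abs (E.coeff r) := by
      rw [h1]
      exact (Complex.abs.sub_le (P.coeff r) 0 (E.coeff r)).trans (by simp)
    have h3 := hEcoeff_le r
    have := hEnorm
    rw [habs_b] at h2
    linarith
  have hγpos : 0 < Complex.abs γ := AbsoluteValue.pos _ hγ
  have hWη : t * η < W k - η := by linarith [hηW, show (t+1)*η = t*η + η from by ring]
  have hPr_pos : 0 < Complex.abs (P.coeff r) := by nlinarith [hPr_low, hWη, mul_nonneg ht0.le hη0]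
  have hcr_ne : c r ≠ 0 := by
    intro h0
    have := habs_c r
    rw [h0] at this
    simp only [Int.cast_zero, abs_zero] at this
    nlinarith [mul_pos hγpos hPr_pos]
  -- define g
  set ε : ℤ := if 0 ≤ c r then 1 else -1 with hε
  have hεne : ε ≠ 0 := by
    rw [hε]; split_ifs <;> norm_num
  set g : Polynomial ℤ := C ε * Polynomial.expand ℤ q (Fs f k) with hg
  have hFsne : Fs f k ≠ 0 := by
    intro h0
    apply hγ
    have := hΦ
    rw [h0, Polynomial.map_zero] at this
    have hPrne : Pr ν ≠ 0 := (Pr_monic ν).ne_zero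
    rcases mul_eq_zero.1 this.symm with h | h
    · exact (Polynomial.C_eq_zero.1 h)
    · exact absurd h hPrne
  have hexpne : Polynomial.expand ℤ q (Fs f k) ≠ 0 := by
    intro h0
    apply hFsne
    have := Polynomial.expand_injective hq0 (R := ℤ)
    apply this
    rw [h0, map_zero]
  have hgne : g ≠ 0 := mul_ne_zero (by simpa using hεne) hexpne
  have hgdvd : f ∣ g := Dvd.dvd.mul_left (Fs_dvd f k) (C ε)
  have hgdeg : g.natDegree = n * q := by
    rw [hg, Polynomial.natDegree_C_mul hεne, Polynomial.natDegree_expand,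
      Fs_natDegree f hf k]
  set L := r * q with hL
  have hLle : L ≤ g.natDegree := by
    rw [hgdeg, hL]
    exact Nat.mul_le_mul_right q hrn
  have hgc : ∀ l, g.coeff l = ε * (if q ∣ l then c (l/q) else 0) := by
    intro l
    rw [hg, Polynomial.coeff_C_mul, Polynomial.coeff_expand hq0]
  have hgL : g.coeff L = |c r| := by
    have hdvd : q ∣ r * q := ⟨r, mul_comm r q⟩
    rw [hgc, hL, if_pos hdvd, Nat.mul_div_cancel r hq0]
    rw [hε]
    split_ifs with h
    · rw [one_mul, abs_of_nonneg h]
    · rw [neg_one_mul, abs_of_neg (not_le.1 h)]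
  refine ⟨g, L, hgne, hgdvd, hLle, ?_, ?_⟩
  · -- main inequality
    have step2 : ∑ j ∈ (Finset.range (n+1)).erase r, |(c j : ℝ)| ≤ Complex.abs γ * η := by
      have h1 : ∀ j ∈ (Finset.range (n+1)).erase r, |(c j : ℝ)|
          = Complex.abs γ * Complex.abs (E.coeff j) := by
        intro j hj
        rw [habs_c j, hPE j (Finset.ne_of_mem_erase hj)]
      rw [Finset.sum_congr rfl h1, ← Finset.mul_sum]
      exact mul_le_mul_of_nonneg_left ((sum_abs_coeff_le E _).trans hEnorm) hγpos.le
    have step1 : ∑ l ∈ (Finset.range (g.natDegree + 1)).erase L, |(g.coeff l : ℝ)|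
        ≤ ∑ j ∈ (Finset.range (n+1)).erase r, |(c j : ℝ)| := by
      set T := (Finset.range (g.natDegree + 1)).erase L with hT
      set T' := T.filter (fun l => q ∣ l) with hT'
      have e1 : ∑ l ∈ T, |(g.coeff l : ℝ)| = ∑ l ∈ T', |(g.coeff l : ℝ)| := by
        refine (Finset.sum_subset (Finset.filter_subset _ _) ?_).symm
        intro l hl hnl
        have hnd : ¬ q ∣ l := by
          intro hd
          exact hnl (Finset.mem_filter.2 ⟨hl, hd⟩)
        rw [hgc l, if_neg hnd, mul_zero]
        simp
      have e2 : ∑ l ∈ T', |(g.coeff l : ℝ)| = ∑ l ∈ T', |(c (l/q) : ℝ)| := by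
        refine Finset.sum_congr rfl ?_
        intro l hl
        have hd : q ∣ l := (Finset.mem_filter.1 hl).2
        rw [hgc l, if_pos hd]
        push_cast
        rw [abs_mul]
        have : |(ε : ℝ)| = 1 := by
          rw [hε]; split_ifs <;> norm_num
        rw [this, one_mul]
      have hinj : Set.InjOn (fun l => l / q) T' := by
        intro x hx y hy hxy
        have hdx : q ∣ x := (Finset.mem_filter.1 hx).2
        have hdy : q ∣ y := (Finset.mem_filter.1 hy).2
        have : x / q = y / q := hxy
        calc x = q * (x/q) := (Nat.mul_div_cancel' hdx).symm
          _ = q * (y/q) := by rw [this]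
          _ = y := Nat.mul_div_cancel' hdy
      have e3 : ∑ l ∈ T', |(c (l/q) : ℝ)| = ∑ j ∈ T'.image (fun l => l / q), |(c j : ℝ)| :=
        (Finset.sum_image (f := fun j => |(c j : ℝ)|) (fun x hx y hy h => hinj hx hy h)).symm
      have hsub : T'.image (fun l => l / q) ⊆ (Finset.range (n+1)).erase r := by
        intro j hj
        rcases Finset.mem_image.1 hj with ⟨l, hl, rfl⟩
        have hd : q ∣ l := (Finset.mem_filter.1 hl).2
        have hlT : l ∈ T := (Finset.mem_filter.1 hl).1
        have hlr : l ≠ L := Finset.ne_of_mem_erase hlT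
        have hlrange : l ∈ Finset.range (g.natDegree + 1) := Finset.mem_of_mem_erase hlT
        have hlle : l ≤ n * q := by
          have := Finset.mem_range.1 hlrange
          rw [hgdeg] at this
          omega
        refine Finset.mem_erase.2 ⟨?_, ?_⟩
        · intro hjr
          apply hlr
          rw [hL, ← hjr]
          exact (Nat.div_mul_cancel hd).symm
        · rw [Finset.mem_range]
          have : l / q ≤ n * q / q := Nat.div_le_div_right hlle
          rw [Nat.mul_div_cancel n hq0] at this
          omega
      rw [e1, e2, e3]
      exact Finset.sum_le_sum_of_subset_of_nonneg hsub (fun _ _ _ => abs_nonneg _)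
    have hrhs : Complex.abs γ * η < (1/t) * (g.coeff L : ℝ) := by
      have h1 : (g.coeff L : ℝ) = |(c r : ℝ)| := by
        rw [hgL, Int.cast_abs]
      rw [h1, habs_c r]
      have h2 : η < (1/t) * (W k - η) := by
        rw [one_div, ← div_eq_inv_mul, lt_div_iff₀ ht0]
        have := mul_comm t η
        linarith
      calc Complex.abs γ * η < Complex.abs γ * ((1/t) * (W k - η)) :=
            mul_lt_mul_of_pos_left h2 hγpos
        _ ≤ Complex.abs γ * ((1/t) * Complex.abs (P.coeff r)) := by
            refine mul_le_mul_of_nonneg_left ?_ hγpos.le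
            exact mul_le_mul_of_nonneg_left hPr_low (by positivity)
        _ = 1/t * (Complex.abs γ * Complex.abs (P.coeff r)) := by ring
    calc ∑ l ∈ (Finset.range (g.natDegree + 1)).erase L, |(g.coeff l : ℝ)|
        ≤ ∑ j ∈ (Finset.range (n+1)).erase r, |(c j : ℝ)| := step1
      _ ≤ Complex.abs γ * η := step2
      _ < (1/t) * (g.coeff L : ℝ) := hrhs
  · -- L = 0 clause
    intro hall
    have hμin0 : μin = 0 := by
      rw [hμin]
      rw [Multiset.filter_eq_nil]
      intro a ha
      have h3 : F.IsRoot a := (Polynomial.mem_roots'.1 ha).2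
      have := hall a h3
      exact not_lt.2 this.le
    rw [hL, hr, hμin0]
    simp
end

section
/- Let M ∈ Z^{m×m} be non-singular with no eigenvalue of modulus 1. Then there exists a polynomial g ∈ Z[X], g(X) = Σ_{l=0}^{p−1} c_l X^l, with g(M) = 0 (the zero matrix), and an index L such that c_L ≥ 4·(C + Σ_{l≠L} |c_l|), where C = c_L − 4·⌊c_L/4⌋ ∈ {0,1,2,3}. -/
open Matrix Polynomial BigOperators

namespace DominantAux

lemma mprod_nonneg (s : Multiset ℝ) (h : ∀ x ∈ s, 0 ≤ x) : 0 ≤ s.prod := by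
  induction s using Multiset.induction_on with
  | empty => simp
  | cons a t ih =>
      simp only [Multiset.prod_cons]
      exact mul_nonneg (h a (Multiset.mem_cons_self a t))
        (ih fun x hx => h x (Multiset.mem_cons_of_mem hx))

lemma mprod_le_one (s : Multiset ℝ) (h0 : ∀ x ∈ s, 0 ≤ x) (h1 : ∀ x ∈ s, x ≤ 1) :
    s.prod ≤ 1 := by
  induction s using Multiset.induction_on with
  | empty => simp
  | cons a t ih =>
      simp only [Multiset.prod_cons]
      have ha0 := h0 a (Multiset.mem_cons_self a t)
      have ha1 := h1 a (Multiset.mem_cons_self a t)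
      have ht0 : (0:ℝ) ≤ t.prod :=
        mprod_nonneg t fun x hx => h0 x (Multiset.mem_cons_of_mem hx)
      have ht1 : t.prod ≤ 1 := ih (fun x hx => h0 x (Multiset.mem_cons_of_mem hx))
        (fun x hx => h1 x (Multiset.mem_cons_of_mem hx))
      nlinarith

lemma mone_le_prod (s : Multiset ℝ) (h : ∀ x ∈ s, 1 ≤ x) : 1 ≤ s.prod := by
  induction s using Multiset.induction_on with
  | empty => simp
  | cons a t ih =>
      simp only [Multiset.prod_cons]
      have ha := h a (Multiset.mem_cons_self a t)
      have ht := ih fun x hx => h x (Multiset.mem_cons_of_mem hx)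
      nlinarith

lemma mprod_le_of_ne_zero (s : Multiset ℝ) (c : ℝ) (hc0 : 0 ≤ c) (hc1 : c ≤ 1) (hs : s ≠ 0)
    (h0 : ∀ x ∈ s, 0 ≤ x) (h : ∀ x ∈ s, x ≤ c) : s.prod ≤ c := by
  obtain ⟨a, ha⟩ := Multiset.exists_mem_of_ne_zero hs
  have hs' : s = a ::ₘ s.erase a := (Multiset.cons_erase ha).symm
  rw [hs', Multiset.prod_cons]
  have h0' : ∀ x ∈ s.erase a, 0 ≤ x := fun x hx => h0 x (Multiset.mem_of_mem_erase hx)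
  have h1' : ∀ x ∈ s.erase a, x ≤ 1 := fun x hx =>
    le_trans (h x (Multiset.mem_of_mem_erase hx)) hc1
  have ht0 := mprod_nonneg _ h0'
  have ht1 := mprod_le_one _ h0' h1'
  have ha0 := h0 a ha
  have hac := h a ha
  nlinarith

lemma mle_prod_of_ne_zero (s : Multiset ℝ) (c : ℝ) (hc : 1 ≤ c) (hs : s ≠ 0)
    (h : ∀ x ∈ s, c ≤ x) : c ≤ s.prod := by
  obtain ⟨a, ha⟩ := Multiset.exists_mem_of_ne_zero hs
  have hs' : s = a ::ₘ s.erase a := (Multiset.cons_erase ha).symm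
  rw [hs', Multiset.prod_cons]
  have h1' : ∀ x ∈ s.erase a, 1 ≤ x := fun x hx =>
    le_trans hc (h x (Multiset.mem_of_mem_erase hx))
  have ht := mone_le_prod _ h1'
  have hac := h a ha
  nlinarith

lemma msum_le_card_mul (s : Multiset ℝ) (B : ℝ) (h : ∀ x ∈ s, x ≤ B) :
    s.sum ≤ (Multiset.card s : ℝ) * B := by
  induction s using Multiset.induction_on with
  | empty => simp
  | cons a t ih =>
      simp only [Multiset.sum_cons, Multiset.card_cons]
      have ha := h a (Multiset.mem_cons_self a t)
      have ht := ih fun x hx => h x (Multiset.mem_cons_of_mem hx)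
      push_cast
      nlinarith [ht, ha]

lemma mabs_prod (s : Multiset ℂ) : ‖s.prod‖ = (s.map (‖·‖)).prod := by
  induction s using Multiset.induction_on with
  | empty => simp
  | cons a t ih => simp [Multiset.prod_cons, _root_.map_mul, ih]

lemma mabs_sum_le (s : Multiset ℂ) : ‖s.sum‖ ≤ (s.map (‖·‖)).sum := by
  induction s using Multiset.induction_on with
  | empty => simp
  | cons a t ih =>
      simp only [Multiset.sum_cons, Multiset.map_cons]
      exact le_trans (norm_add_le a t.sum) (by linarith)

lemma choose_le_two_pow (c j : ℕ) : (c.choose j : ℝ) ≤ 2 ^ c := by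
  have h : c.choose j ≤ 2 ^ c := by
    rcases le_or_gt j c with h | h
    · calc c.choose j ≤ ∑ i ∈ Finset.range (c + 1), c.choose i :=
          Finset.single_le_sum (fun i _ => Nat.zero_le _) (Finset.mem_range.mpr (by omega))
        _ = 2 ^ c := Nat.sum_range_choose c
    · simp [Nat.choose_eq_zero_of_lt h]
  exact_mod_cast h

lemma coeff_prod_linear_le (t : Multiset ℂ) (j : ℕ) (hj : j ≤ Multiset.card t) (B : ℝ)
    (hB0 : 0 ≤ B)
    (hS : ∀ S : Multiset ℂ, S ≤ t → Multiset.card S = Multiset.card t - j →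
      (S.map (‖·‖)).prod ≤ B) :
    ‖(((t.map fun z => X - C z).prod).coeff j)‖ ≤ 2 ^ (Multiset.card t) * B := by
  rw [Multiset.prod_X_sub_C_coeff t hj]
  rw [show ‖((-1) ^ (Multiset.card t - j) * t.esymm (Multiset.card t - j))‖
      = ‖(t.esymm (Multiset.card t - j))‖ by
    simp [norm_mul, norm_pow]]
  rw [Multiset.esymm]
  refine le_trans (mabs_sum_le _) ?_
  rw [Multiset.map_map]
  have hb : ∀ x ∈ (Multiset.powersetCard (Multiset.card t - j) t).map
      ((‖·‖) ∘ Multiset.prod), x ≤ B := by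
    intro x hx
    obtain ⟨S, hSmem, rfl⟩ := Multiset.mem_map.mp hx
    obtain ⟨hle, hcard⟩ := Multiset.mem_powersetCard.mp hSmem
    simpa [Function.comp, mabs_prod] using hS S hle hcard
  refine le_trans (msum_le_card_mul _ B hb) ?_
  rw [Multiset.card_map, Multiset.card_powersetCard]
  exact mul_le_mul_of_nonneg_right (choose_le_two_pow _ _) hB0

lemma prod_abs_roots (p : Polynomial ℂ) (hp : p.Monic) :
    ((p.roots).map (‖·‖)).prod = ‖(p.coeff 0)‖ := by
  have h := (IsAlgClosed.splits p).eq_prod_roots_of_monic hp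
  rw [coeff_zero_eq_eval_zero]
  conv_rhs => rw [h]
  rw [eval_multiset_prod, Multiset.map_map, mabs_prod, Multiset.map_map]
  apply congrArg
  apply Multiset.map_congr rfl
  intro z hz
  simp [Function.comp]

lemma eval_charpoly' {k : ℕ} (B : Matrix (Fin k) (Fin k) ℂ) (t : ℂ) :
    B.charpoly.eval t = (t • (1 : Matrix (Fin k) (Fin k) ℂ) - B).det := by
  rw [Matrix.charpoly, ← Polynomial.coe_evalRingHom, RingHom.map_det]
  congr 1
  ext i j
  by_cases h : i = j <;>
    simp [h, Matrix.charmatrix_apply, Matrix.smul_apply, Matrix.one_apply, Matrix.sub_apply,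
      Matrix.diagonal_apply]

lemma det_aeval_multiset_prod {k : ℕ} (B : Matrix (Fin k) (Fin k) ℂ) (s : Multiset ℂ) :
    ((Polynomial.aeval B) ((s.map fun w => X - C w).prod)).det
      = (s.map fun w => ((Polynomial.aeval B) (X - C w)).det).prod := by
  induction s using Multiset.induction_on with
  | empty => simp
  | cons w t ih =>
      simp only [Multiset.map_cons, Multiset.prod_cons, _root_.map_mul, Matrix.det_mul, ih]

lemma root_pow {k n : ℕ} (hn : 0 < n) (B : Matrix (Fin k) (Fin k) ℂ) {z : ℂ}
    (hz : ((B ^ n).charpoly).IsRoot z) : ∃ w : ℂ, B.charpoly.IsRoot w ∧ w ^ n = z := by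
  have h1 : (z • (1 : Matrix (Fin k) (Fin k) ℂ) - B ^ n).det = 0 := by
    rw [← eval_charpoly']; exact hz
  set P : Polynomial ℂ := X ^ n - C z with hP
  have hPm : P.Monic := monic_X_pow_sub_C z (by omega)
  have hPfact : P = (P.roots.map fun w => X - C w).prod :=
    (IsAlgClosed.splits P).eq_prod_roots_of_monic hPm
  have haeval : Polynomial.aeval B P = B ^ n - z • (1 : Matrix (Fin k) (Fin k) ℂ) := by
    simp [hP, Algebra.algebraMap_eq_smul_one]
  have h2 : ((Polynomial.aeval B) P).det = 0 := by
    rw [haeval]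
    have hneg : B ^ n - z • (1 : Matrix (Fin k) (Fin k) ℂ)
        = -(z • (1 : Matrix (Fin k) (Fin k) ℂ) - B ^ n) := by abel
    rw [hneg, Matrix.det_neg, h1, mul_zero]
  rw [hPfact, det_aeval_multiset_prod] at h2
  have h3 : (0:ℂ) ∈ P.roots.map fun w => ((Polynomial.aeval B) (X - C w)).det :=
    Multiset.prod_eq_zero_iff.mp h2
  obtain ⟨w, hw, hw0⟩ := Multiset.mem_map.mp h3
  refine ⟨w, ?_, ?_⟩
  · have haw : (Polynomial.aeval B) (X - C w) = B - w • (1 : Matrix (Fin k) (Fin k) ℂ) := by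
      simp [Algebra.algebraMap_eq_smul_one]
    have : (w • (1 : Matrix (Fin k) (Fin k) ℂ) - B).det = 0 := by
      have hneg : w • (1 : Matrix (Fin k) (Fin k) ℂ) - B
          = -(B - w • (1 : Matrix (Fin k) (Fin k) ℂ)) := by abel
      rw [hneg, Matrix.det_neg, ← haw, hw0, mul_zero]
    rw [Polynomial.IsRoot, eval_charpoly', this]
  · have := Polynomial.isRoot_of_mem_roots hw
    have h4 : w ^ n - z = 0 := by simpa [hP] using this
    exact sub_eq_zero.mp h4

lemma core {m : ℕ} (hm : 1 ≤ m) (q : Polynomial ℤ) (hmonic : q.Monic) (hdeg : q.natDegree = m)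
    (α β : ℝ) (hα : 1 < α) (hβ0 : 0 ≤ β) (hβ1 : β < 1)
    (hroots : ∀ z ∈ (q.map (Int.castRingHom ℂ)).roots, ‖z‖ ≤ β ∨ α ≤ ‖z‖)
    (h0 : 1 ≤ |q.coeff 0|) :
    ∃ (d : ℕ) (A : ℝ), 1 ≤ d ∧ d ≤ m ∧ α ≤ A ∧
      A - ((m : ℝ) + 1) * 2 ^ m * (max α⁻¹ β) * A ≤ ((|q.coeff (m - d)| : ℤ) : ℝ) ∧
      ∀ k, k ≤ m → k ≠ m - d →
        ((|q.coeff k| : ℤ) : ℝ) ≤ ((m : ℝ) + 1) * 2 ^ m * (max α⁻¹ β) * A := by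
  classical
  set p := q.map (Int.castRingHom ℂ) with hpdef
  have hα0 : (0:ℝ) < α := by linarith
  have hpm : p.Monic := hmonic.map _
  have hpdeg : p.natDegree = m := by
    rw [hpdef, hmonic.natDegree_map]; exact hdeg
  have hsplit : p.Splits := IsAlgClosed.splits p
  have hcard : Multiset.card p.roots = m := by
    rw [← hpdeg]; exact splits_iff_card_roots.mp hsplit
  have hcoeff : ∀ k, ‖(p.coeff k)‖ = ((|q.coeff k| : ℤ) : ℝ) := by
    intro k
    rw [hpdef, coeff_map]
    simp [Complex.norm_intCast, Int.cast_abs]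
  set O := p.roots.filter (fun z => α ≤ ‖z‖) with hOdef
  set I := p.roots.filter (fun z => ¬ α ≤ ‖z‖) with hIdef
  have hOI : O + I = p.roots := Multiset.filter_add_not _ _
  have hOmem : ∀ z ∈ O, α ≤ ‖z‖ := fun z hz => (Multiset.mem_filter.mp hz).2
  have hImem : ∀ z ∈ I, ‖z‖ ≤ β := by
    intro z hz
    rcases hroots z (Multiset.mem_filter.mp hz).1 with h | h
    · exact h
    · exact absurd h (Multiset.mem_filter.mp hz).2
  set d := Multiset.card O with hddef
  set e := Multiset.card I with hedef
  have hsum : d + e = m := by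
    rw [hddef, hedef, ← Multiset.card_add, hOI, hcard]
  have hprodall : (1:ℝ) ≤ ((p.roots).map (‖·‖)).prod := by
    rw [prod_abs_roots p hpm, hcoeff 0]
    exact_mod_cast h0
  have hr0 : p.roots ≠ 0 := by
    intro h; rw [h] at hcard; simp at hcard; omega
  have hOne : O ≠ 0 := by
    intro hO0
    have hIeq : I = p.roots := by rw [← hOI, hO0, zero_add]
    have hle : ((p.roots).map (‖·‖)).prod ≤ β := by
      apply mprod_le_of_ne_zero _ β hβ0 hβ1.le
      · simp [Multiset.map_eq_zero, hr0]
      · intro x hx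
        obtain ⟨z, hz, rfl⟩ := Multiset.mem_map.mp hx
        exact norm_nonneg z
      · intro x hx
        obtain ⟨z, hz, rfl⟩ := Multiset.mem_map.mp hx
        exact hImem z (hIeq ▸ hz)
    linarith
  have hd1 : 1 ≤ d := by
    have := Multiset.card_pos.mpr hOne
    omega
  have hdm : d ≤ m := by omega
  set A := (O.map (‖·‖)).prod with hAdef
  have hαA : α ≤ A := by
    apply mle_prod_of_ne_zero _ α hα.le (by simp [Multiset.map_eq_zero, hOne])
    intro x hx
    obtain ⟨z, hz, rfl⟩ := Multiset.mem_map.mp hx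
    exact hOmem z hz
  have hA0 : (0:ℝ) < A := lt_of_lt_of_le hα0 hαA
  set sv := max α⁻¹ β with hsv
  have hsv0 : (0:ℝ) ≤ sv := le_trans (by positivity) (le_max_left _ _)
  have hsvα : α⁻¹ ≤ sv := le_max_left _ _
  have hsvβ : β ≤ sv := le_max_right _ _
  set qO := (O.map fun z => X - C z).prod with hqOdef
  set qI := (I.map fun z => X - C z).prod with hqIdef
  have hqOmonic : qO.Monic := monic_multiset_prod_of_monic _ _ (fun z _ => monic_X_sub_C z)
  have hqImonic : qI.Monic := monic_multiset_prod_of_monic _ _ (fun z _ => monic_X_sub_C z)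
  have hqOdeg : qO.natDegree = d := natDegree_multiset_prod_X_sub_C_eq_card O
  have hqIdeg : qI.natDegree = e := natDegree_multiset_prod_X_sub_C_eq_card I
  have hpfact : p = qO * qI := by
    conv_lhs => rw [hsplit.eq_prod_roots_of_monic hpm]
    rw [← hOI, Multiset.map_add, Multiset.prod_add]
  have habs_nonneg : ∀ (S : Multiset ℂ), ∀ x ∈ S.map (‖·‖), (0:ℝ) ≤ x := by
    intro S x hx
    obtain ⟨z, hz, rfl⟩ := Multiset.mem_map.mp hx
    exact norm_nonneg z
  -- bound on qO coefficients for i ≥ 1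
  have hOc : ∀ i, 1 ≤ i → ‖(qO.coeff i)‖ ≤ 2 ^ d * (A * α⁻¹) := by
    intro i hi1
    rcases le_or_gt i d with hid | hid
    · refine coeff_prod_linear_le O i (by omega) _ (by positivity) ?_
      intro S hle hcards
      obtain ⟨D, hD⟩ := Multiset.le_iff_exists_add.mp hle
      have hDcard : Multiset.card D = i := by
        have hc := congrArg Multiset.card hD
        rw [Multiset.card_add] at hc
        omega
      have hDne : D ≠ 0 := by
        intro h; rw [h] at hDcard; simp at hDcard; omega
      have hprodD : α ≤ (D.map (‖·‖)).prod := by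
        apply mle_prod_of_ne_zero _ α hα.le (by simp [Multiset.map_eq_zero, hDne])
        intro x hx
        obtain ⟨z, hz, rfl⟩ := Multiset.mem_map.mp hx
        exact hOmem z (by rw [hD]; exact Multiset.mem_add.mpr (Or.inr hz))
      have hsplitA : A = (S.map (‖·‖)).prod * (D.map (‖·‖)).prod := by
        rw [hAdef, hD, Multiset.map_add, Multiset.prod_add]
      have hSn : (0:ℝ) ≤ (S.map (‖·‖)).prod := mprod_nonneg _ (habs_nonneg S)
      have hkey : (S.map (‖·‖)).prod * α ≤ A := by
        rw [hsplitA]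
        exact mul_le_mul_of_nonneg_left hprodD hSn
      calc (S.map (‖·‖)).prod = (S.map (‖·‖)).prod * α * α⁻¹ := by
            field_simp
        _ ≤ A * α⁻¹ := mul_le_mul_of_nonneg_right hkey (by positivity)
    · rw [coeff_eq_zero_of_natDegree_lt (show qO.natDegree < i by rw [hqOdeg]; omega)]
      simp only [norm_zero]
      positivity
  -- bounds on qI coefficients
  have hIc1 : ∀ j, ‖(qI.coeff j)‖ ≤ 2 ^ e * 1 := by
    intro j
    rcases le_or_gt j e with hje | hje
    · refine coeff_prod_linear_le I j (by omega) _ (by norm_num) ?_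
      intro S hle _
      apply mprod_le_one _ (habs_nonneg S)
      intro x hx
      obtain ⟨z, hz, rfl⟩ := Multiset.mem_map.mp hx
      exact le_trans (hImem z (Multiset.mem_of_le hle hz)) (by linarith)
    · rw [coeff_eq_zero_of_natDegree_lt (show qI.natDegree < j by rw [hqIdeg]; omega)]
      simp only [norm_zero]
      positivity
  have hIcβ : ∀ j, j < e → ‖(qI.coeff j)‖ ≤ 2 ^ e * β := by
    intro j hje
    refine coeff_prod_linear_le I j (by omega) _ hβ0 ?_
    intro S hle hcards
    have hSne : S ≠ 0 := by
      intro h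
      rw [h] at hcards
      simp at hcards
      omega
    apply mprod_le_of_ne_zero _ β hβ0 hβ1.le (by simp [Multiset.map_eq_zero, hSne])
      (habs_nonneg S)
    intro x hx
    obtain ⟨z, hz, rfl⟩ := Multiset.mem_map.mp hx
    exact hImem z (Multiset.mem_of_le hle hz)
  have hqO0 : ‖(qO.coeff 0)‖ = A := by
    rw [← prod_abs_roots qO hqOmonic, hqOdef, roots_multiset_prod_X_sub_C]
  have hqIlead : qI.coeff e = 1 := by
    rw [← hqIdeg]
    exact hqImonic.coeff_natDegree
  have h2de : (2:ℝ) ^ d * 2 ^ e = 2 ^ m := by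
    rw [← pow_add, hsum]
  have h2m0 : (0:ℝ) < 2 ^ m := by positivity
  -- uniform per-term bound
  have hterm : ∀ x : ℕ × ℕ, x ≠ (0, e) →
      ‖(qO.coeff x.1 * qI.coeff x.2)‖ ≤ 2 ^ m * sv * A := by
    rintro ⟨i, j⟩ hx
    rw [norm_mul]
    rcases Nat.eq_zero_or_pos i with rfl | hi
    · have hj : j ≠ e := by
        intro h; exact hx (by rw [h])
      rcases lt_or_gt_of_ne hj with hje | hje
      · have h1 := hIcβ j hje
        rw [hqO0]
        have h2e : (2:ℝ) ^ e ≤ 2 ^ m := by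
          apply pow_le_pow_right₀ (by norm_num)
          omega
        calc A * ‖(qI.coeff j)‖ ≤ A * (2 ^ e * β) :=
              mul_le_mul_of_nonneg_left h1 hA0.le
          _ ≤ A * (2 ^ m * sv) :=
              mul_le_mul_of_nonneg_left (mul_le_mul h2e hsvβ hβ0 h2m0.le) hA0.le
          _ = 2 ^ m * sv * A := by ring
      · rw [coeff_eq_zero_of_natDegree_lt (show qI.natDegree < j by rw [hqIdeg]; omega)]
        simp only [norm_zero, mul_zero]
        positivity
    · have h1 := hOc i hi
      have h2 := hIc1 j
      have hOn : (0:ℝ) ≤ ‖(qO.coeff i)‖ := norm_nonneg _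
      have hIn : (0:ℝ) ≤ ‖(qI.coeff j)‖ := norm_nonneg _
      calc ‖(qO.coeff i)‖ * ‖(qI.coeff j)‖
          ≤ (2 ^ d * (A * α⁻¹)) * (2 ^ e * 1) := by
            apply mul_le_mul h1 h2 hIn (by positivity)
        _ = 2 ^ m * (α⁻¹ * A) := by rw [mul_one, ← h2de]; ring
        _ ≤ 2 ^ m * (sv * A) := by
            apply mul_le_mul_of_nonneg_left _ h2m0.le
            exact mul_le_mul_of_nonneg_right hsvα hA0.le
        _ = 2 ^ m * sv * A := by ring
  have hterm' : (0:ℝ) ≤ 2 ^ m * sv * A := by positivity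
  -- upper bound for all k ≠ m - d
  have hothers : ∀ k, k ≤ m → k ≠ m - d →
      ‖(p.coeff k)‖ ≤ ((m:ℝ) + 1) * 2 ^ m * sv * A := by
    intro k hk hke
    rw [hpfact, coeff_mul]
    refine le_trans (norm_sum_le _ _) ?_
    refine le_trans (Finset.sum_le_card_nsmul _ _ (2 ^ m * sv * A) ?_) ?_
    · intro x hx
      have hx' := Finset.HasAntidiagonal.mem_antidiagonal.mp hx
      apply hterm
      intro hxe
      rw [hxe] at hx'
      simp at hx'
      omega
    · rw [Finset.Nat.card_antidiagonal, nsmul_eq_mul]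
      have hcast : ((k + 1 : ℕ) : ℝ) ≤ (m:ℝ) + 1 := by
        exact_mod_cast Nat.succ_le_succ hk
      calc ((k + 1 : ℕ) : ℝ) * (2 ^ m * sv * A) ≤ ((m:ℝ) + 1) * (2 ^ m * sv * A) :=
            mul_le_mul_of_nonneg_right hcast hterm'
        _ = ((m:ℝ) + 1) * 2 ^ m * sv * A := by ring
  -- lower bound for k = m - d
  have hmain : A - ((m:ℝ) + 1) * 2 ^ m * sv * A ≤ ‖(p.coeff (m - d))‖ := by
    have hek : m - d = e := by omega
    have hmem : ((0 : ℕ), m - d) ∈ Finset.HasAntidiagonal.antidiagonal (m - d) := by simp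
    have hco : p.coeff (m - d)
        = qO.coeff 0 * qI.coeff (m - d)
          + ∑ x ∈ (Finset.HasAntidiagonal.antidiagonal (m - d)).erase (0, m - d),
              qO.coeff x.1 * qI.coeff x.2 := by
      rw [hpfact, coeff_mul, ← Finset.add_sum_erase _ _ hmem]
    have hmabs : ‖(qO.coeff 0 * qI.coeff (m - d))‖ = A := by
      rw [hek, hqIlead, mul_one, hqO0]
    have hrest : ‖(∑ x ∈ (Finset.HasAntidiagonal.antidiagonal (m - d)).erase (0, m - d),
        qO.coeff x.1 * qI.coeff x.2)‖ ≤ ((m:ℝ)) * (2 ^ m * sv * A) := by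
      refine le_trans (norm_sum_le _ _) ?_
      refine le_trans (Finset.sum_le_card_nsmul _ _ (2 ^ m * sv * A) ?_) ?_
      · intro x hx
        apply hterm
        have hxne := Finset.ne_of_mem_erase hx
        rw [← hek]
        exact hxne
      · rw [Finset.card_erase_of_mem hmem, Finset.Nat.card_antidiagonal, nsmul_eq_mul]
        have hcast : ((m - d + 1 - 1 : ℕ) : ℝ) ≤ (m:ℝ) := by
          have : (m - d + 1 - 1 : ℕ) ≤ m := by omega
          exact_mod_cast this
        exact mul_le_mul_of_nonneg_right hcast hterm'
    have htri : A ≤ ‖(p.coeff (m - d))‖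
        + ‖(∑ x ∈ (Finset.HasAntidiagonal.antidiagonal (m - d)).erase (0, m - d),
            qO.coeff x.1 * qI.coeff x.2)‖ := by
      rw [← hmabs]
      have : qO.coeff 0 * qI.coeff (m - d)
          = p.coeff (m - d) - ∑ x ∈ (Finset.HasAntidiagonal.antidiagonal (m - d)).erase (0, m - d),
              qO.coeff x.1 * qI.coeff x.2 := by
        rw [hco]; ring
      rw [this]
      calc ‖(p.coeff (m - d) - ∑ x ∈ (Finset.HasAntidiagonal.antidiagonal (m - d)).erase (0, m - d),
              qO.coeff x.1 * qI.coeff x.2)‖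
          = ‖(p.coeff (m - d) + -(∑ x ∈ (Finset.HasAntidiagonal.antidiagonal (m - d)).erase (0, m - d),
              qO.coeff x.1 * qI.coeff x.2))‖ := by rw [sub_eq_add_neg]
        _ ≤ ‖(p.coeff (m - d))‖ + ‖(-(∑ x ∈ (Finset.HasAntidiagonal.antidiagonal (m - d)).erase (0, m - d),
              qO.coeff x.1 * qI.coeff x.2))‖ := norm_add_le _ _
        _ = ‖(p.coeff (m - d))‖ + ‖(∑ x ∈ (Finset.HasAntidiagonal.antidiagonal (m - d)).erase (0, m - d),
              qO.coeff x.1 * qI.coeff x.2)‖ := by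
            have hneg : ∀ x : ℂ, ‖(-x)‖ = ‖x‖ := fun x => by simp
            rw [hneg]
    have hexp : ((m:ℝ) + 1) * 2 ^ m * sv * A = (m:ℝ) * (2 ^ m * sv * A) + 2 ^ m * sv * A := by
      ring
    linarith [htri, hrest, hterm', hexp]
  refine ⟨d, A, hd1, hdm, hαA, ?_, ?_⟩
  · rw [← hcoeff]
    exact hmain
  · intro k hk hke
    rw [← hcoeff]
    exact hothers k hk hke

end DominantAux

open DominantAux

theorem dominant_annihilating_polynomial {m : ℕ} (M : Matrix (Fin m) (Fin m) ℤ)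
    (hM : M.det ≠ 0)
    (heig : ∀ z : ℂ, (M.map (Int.cast : ℤ → ℂ)).charpoly.IsRoot z → ‖z‖ ≠ 1) :
    ∃ (g : Polynomial ℤ) (L : ℕ), g ≠ 0 ∧ L ≤ g.natDegree ∧
      Polynomial.aeval M g = 0 ∧
      g.coeff L ≥ 4 * ((g.coeff L - 4 * (g.coeff L / 4)) +
        ∑ l ∈ (Finset.range (g.natDegree + 1)).erase L, |g.coeff l|) := by
  classical
  rcases Nat.eq_zero_or_pos m with rfl | hm
  · refine ⟨Polynomial.C 4, 0, Polynomial.C_ne_zero.mpr (by norm_num), Nat.zero_le _,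
      Subsingleton.elim _ _, ?_⟩
    simp [Polynomial.natDegree_C]
  -- main case
  set Mc := M.map (Int.cast : ℤ → ℂ) with hMc
  set χ := Mc.charpoly with hχ
  have hχm : χ.Monic := Matrix.charpoly_monic Mc
  have hχdeg : χ.natDegree = m := by
    rw [hχ, Matrix.charpoly_natDegree_eq_dim, Fintype.card_fin]
  have hχcard : Multiset.card χ.roots = m := by
    rw [← hχdeg]
    exact splits_iff_card_roots.mp (IsAlgClosed.splits χ)
  set Λ := χ.roots with hΛ
  have hroots_ne1 : ∀ z ∈ Λ, ‖z‖ ≠ 1 := fun z hz =>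
    heig z (isRoot_of_mem_roots hz)
  have hΛne : Λ ≠ 0 := by
    intro h; rw [h] at hχcard; simp at hχcard; omega
  have hdetMc : Mc.det = ((M.det : ℤ) : ℂ) := by
    rw [hMc]
    exact ((Int.castRingHom ℂ).map_det M).symm
  have hprodΛ : (1:ℝ) ≤ (Λ.map (‖·‖)).prod := by
    rw [hΛ, prod_abs_roots χ hχm]
    have h1 : Mc.det = (-1) ^ (Fintype.card (Fin m)) * χ.coeff 0 :=
      Matrix.det_eq_sign_charpoly_coeff Mc
    have h2 : ‖(χ.coeff 0)‖ = ‖(Mc.det)‖ := by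
      rw [h1]
      simp [norm_mul, norm_pow]
    rw [h2, hdetMc, Complex.norm_intCast]
    have h3 : (1:ℤ) ≤ |M.det| := Int.one_le_abs hM
    calc (1:ℝ) ≤ ((|M.det| : ℤ) : ℝ) := by exact_mod_cast h3
      _ = |((M.det : ℤ) : ℝ)| := by rw [Int.cast_abs]
  set F := (Λ.map (‖·‖)).toFinset with hF
  have hdich : ∀ x ∈ F, x < 1 ∨ 1 < x := by
    intro x hx
    obtain ⟨z, hz, rfl⟩ := Multiset.mem_map.mp (Multiset.mem_toFinset.mp hx)
    exact lt_or_gt_of_ne (hroots_ne1 z hz)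
  set Fin' := F.filter (· < 1) with hFin'
  set b := (insert (1/2 : ℝ) Fin').max' (Finset.insert_nonempty _ _) with hbdef
  have hbhalf : (1/2 : ℝ) ≤ b := Finset.le_max' _ _ (Finset.mem_insert_self _ _)
  have hb0 : (0:ℝ) ≤ b := by linarith
  have hb1 : b < 1 := by
    have hmem := Finset.max'_mem (insert (1/2 : ℝ) Fin') (Finset.insert_nonempty _ _)
    rcases Finset.mem_insert.mp hmem with h | h
    · rw [← hbdef] at *; rw [h]; norm_num
    · exact (Finset.mem_filter.mp h).2
  have hbb : ∀ z ∈ Λ, ‖z‖ < 1 → ‖z‖ ≤ b := by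
    intro z hz h1
    apply Finset.le_max'
    exact Finset.mem_insert_of_mem (Finset.mem_filter.mpr
      ⟨Multiset.mem_toFinset.mpr (Multiset.mem_map_of_mem _ hz), h1⟩)
  set Fout := F.filter (fun x => 1 < x) with hFout
  have hFoutne : Fout.Nonempty := by
    by_contra hno
    rw [Finset.not_nonempty_iff_eq_empty] at hno
    have hall : ∀ x ∈ Λ.map (‖·‖), x ≤ b := by
      intro x hx
      obtain ⟨z, hz, rfl⟩ := Multiset.mem_map.mp hx
      rcases hdich _ (Multiset.mem_toFinset.mpr hx) with h | h
      · exact hbb z hz h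
      · exfalso
        have : ‖z‖ ∈ Fout := Finset.mem_filter.mpr
          ⟨Multiset.mem_toFinset.mpr hx, h⟩
        rw [hno] at this
        exact absurd this (Finset.notMem_empty _)
    have hle := mprod_le_of_ne_zero (Λ.map (‖·‖)) b hb0 hb1.le
      (by simp [Multiset.map_eq_zero, hΛne])
      (by intro x hx
          obtain ⟨z, hz, rfl⟩ := Multiset.mem_map.mp hx
          exact norm_nonneg z) hall
    linarith
  set a := Fout.min' hFoutne with hadef
  have ha1 : 1 < a := (Finset.mem_filter.mp (Fout.min'_mem hFoutne)).2
  have ha0 : (0:ℝ) < a := by linarith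
  have hdichΛ : ∀ z ∈ Λ, ‖z‖ ≤ b ∨ a ≤ ‖z‖ := by
    intro z hz
    have hmemF : ‖z‖ ∈ F := Multiset.mem_toFinset.mpr (Multiset.mem_map_of_mem _ hz)
    rcases hdich _ hmemF with h | h
    · exact Or.inl (hbb z hz h)
    · exact Or.inr (Finset.min'_le _ _ (Finset.mem_filter.mpr ⟨hmemF, h⟩))
  -- choose n
  set ε₀ : ℝ := (2 * (4 * (m:ℝ) + 1) * ((m:ℝ) + 1) * 2 ^ m)⁻¹ with hε₀def
  have hε₀ : 0 < ε₀ := by positivity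
  obtain ⟨n₁, hn₁⟩ := exists_pow_lt_of_lt_one hε₀ hb1
  obtain ⟨n₂, hn₂⟩ := exists_pow_lt_of_lt_one hε₀ (inv_lt_one_of_one_lt₀ ha1)
  obtain ⟨n₃, hn₃⟩ := pow_unbounded_of_one_lt (24:ℝ) ha1
  set n := n₁ + n₂ + n₃ + 1 with hndef
  have hn0 : 0 < n := by omega
  have hbn : b ^ n ≤ ε₀ :=
    le_trans (pow_le_pow_of_le_one hb0 hb1.le (by omega)) hn₁.le
  have han : (a ^ n)⁻¹ ≤ ε₀ := by
    rw [← inv_pow]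
    exact le_trans (pow_le_pow_of_le_one (by positivity) (by
      rw [inv_le_one_iff₀]; right; exact ha1.le) (by omega)) hn₂.le
  have h24 : (24:ℝ) ≤ a ^ n :=
    le_trans hn₃.le (pow_le_pow_right₀ ha1.le (by omega))
  -- the polynomial q
  set q := (M ^ n).charpoly with hqdef
  have hqm : q.Monic := Matrix.charpoly_monic _
  have hqdeg : q.natDegree = m := by
    rw [hqdef, Matrix.charpoly_natDegree_eq_dim, Fintype.card_fin]
  have hq0 : 1 ≤ |q.coeff 0| := by
    have h1 : (M ^ n).det = (-1) ^ (Fintype.card (Fin m)) * q.coeff 0 :=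
      Matrix.det_eq_sign_charpoly_coeff _
    have h2 : (M ^ n).det ≠ 0 := by
      rw [Matrix.det_pow]; exact pow_ne_zero _ hM
    have h3 : q.coeff 0 ≠ 0 := by
      intro h; rw [h, mul_zero] at h1; exact h2 h1
    exact Int.one_le_abs h3
  have hpow : (M ^ n).map (Int.cast : ℤ → ℂ) = Mc ^ n := by
    rw [hMc]
    have h := map_pow ((Int.castRingHom ℂ).mapMatrix) M n
    simpa [RingHom.mapMatrix_apply, Int.coe_castRingHom] using h
  have hqmap : q.map (Int.castRingHom ℂ) = (Mc ^ n).charpoly := by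
    rw [← hpow, hqdef]
    exact (Matrix.charpoly_map (M ^ n) (Int.castRingHom ℂ)).symm
  have hqroots : ∀ z ∈ (q.map (Int.castRingHom ℂ)).roots,
      ‖z‖ ≤ b ^ n ∨ a ^ n ≤ ‖z‖ := by
    intro z hz
    rw [hqmap] at hz
    obtain ⟨w, hw, hwn⟩ := root_pow hn0 Mc (isRoot_of_mem_roots hz)
    have hwΛ : w ∈ Λ := by
      rw [hΛ]
      exact Polynomial.mem_roots'.mpr ⟨hχm.ne_zero, hw⟩
    rcases hdichΛ w hwΛ with h | h
    · left
      rw [← hwn, norm_pow]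
      exact pow_le_pow_left₀ (norm_nonneg w) h n
    · right
      rw [← hwn, norm_pow]
      exact pow_le_pow_left₀ (by linarith) h n
  obtain ⟨d, A, hd1, hdm, hαA, hmainb, hothers⟩ :=
    core hm q hqm hqdeg (a ^ n) (b ^ n) (one_lt_pow₀ ha1 (by omega)) (by positivity)
      (pow_lt_one₀ hb0 hb1 (by omega)) hqroots hq0
  set sv := max ((a:ℝ) ^ n)⁻¹ (b ^ n) with hsvdef
  have hsv0 : (0:ℝ) ≤ sv := le_trans (by positivity) (le_max_left _ _)
  have hsvε : sv ≤ ε₀ := max_le han hbn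
  have hA24 : (24:ℝ) ≤ A := le_trans h24 hαA
  have hA0 : (0:ℝ) < A := by linarith
  set k₀ := m - d with hk₀def
  set c₀ := q.coeff k₀ with hc₀def
  set ε : ℤ := if 0 ≤ c₀ then 1 else -1 with hεdef
  set g := Polynomial.C ε * Polynomial.expand ℤ n q with hgdef
  have hCε : (Polynomial.C ε : Polynomial ℤ) ≠ 0 := by
    rw [hεdef]
    split_ifs <;> simp
  have hexp0 : Polynomial.expand ℤ n q ≠ 0 :=
    (Polynomial.expand_ne_zero hn0).mpr hqm.ne_zero
  have hg0 : g ≠ 0 := mul_ne_zero hCε hexp0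
  have hgdeg : g.natDegree = m * n := by
    rw [hgdef, natDegree_mul hCε hexp0, natDegree_C, Polynomial.natDegree_expand, hqdeg, zero_add]
  have hgaeval : Polynomial.aeval M g = 0 := by
    rw [hgdef, _root_.map_mul, Polynomial.expand_aeval, hqdef, Matrix.aeval_self_charpoly, mul_zero]
  have hεabs : |ε| = 1 := by
    rw [hεdef]; split_ifs <;> simp
  set L := n * k₀ with hLdef
  have hLg : L ≤ g.natDegree := by
    rw [hgdeg, hLdef, Nat.mul_comm m n]
    exact Nat.mul_le_mul_left n (by omega)
  have hgc : ∀ l, g.coeff l = ε * (if n ∣ l then q.coeff (l / n) else 0) := by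
    intro l
    rw [hgdef, coeff_C_mul, Polynomial.coeff_expand hn0]
  have hcoefL : g.coeff L = |c₀| := by
    rw [hgc, hLdef, if_pos ⟨k₀, rfl⟩, Nat.mul_div_cancel_left _ hn0]
    rw [hεdef, ← hc₀def]
    split_ifs with h
    · rw [one_mul, abs_of_nonneg h]
    · rw [neg_one_mul, abs_of_neg (by omega)]
  -- the sum over other coefficients
  have hsum_eq : ∑ l ∈ (Finset.range (g.natDegree + 1)).erase L, |g.coeff l|
      = ∑ k ∈ (Finset.range (m + 1)).erase k₀, |q.coeff k| := by
    rw [hgdeg]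
    rw [← Finset.sum_subset (Finset.filter_subset (fun l => n ∣ l)
      ((Finset.range (m * n + 1)).erase L))
      (by
        intro x hx hxn
        rw [hgc x, if_neg (by
          intro hdvd
          exact hxn (Finset.mem_filter.mpr ⟨hx, hdvd⟩)), mul_zero, abs_zero])]
    refine Finset.sum_nbij' (i := fun l => l / n) (j := fun k => n * k) ?_ ?_ ?_ ?_ ?_
    · intro l hl
      obtain ⟨hl1, hdvd⟩ := Finset.mem_filter.mp hl
      have hl2 := Finset.mem_of_mem_erase hl1
      have hl3 := Finset.ne_of_mem_erase hl1
      have hlr := Finset.mem_range.mp hl2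
      apply Finset.mem_erase.mpr
      constructor
      · intro h
        apply hl3
        rw [hLdef, ← h, Nat.mul_div_cancel' hdvd]
      · obtain ⟨c, rfl⟩ := hdvd
        have h1 : n * c ≤ m * n := Nat.lt_succ_iff.mp hlr
        have h2 : n * c ≤ n * m := by rw [Nat.mul_comm m n] at h1; exact h1
        have hcm : c ≤ m := Nat.le_of_mul_le_mul_left h2 hn0
        apply Finset.mem_range.mpr
        show n * c / n < m + 1
        rw [Nat.mul_div_cancel_left _ hn0]
        omega
    · intro k hk
      obtain ⟨hk1, hk2⟩ := Finset.mem_erase.mp hk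
      have hkr := Finset.mem_range.mp hk2
      apply Finset.mem_filter.mpr
      refine ⟨Finset.mem_erase.mpr ⟨?_, Finset.mem_range.mpr ?_⟩, ⟨k, rfl⟩⟩
      · rw [hLdef]
        intro h
        exact hk1 (Nat.eq_of_mul_eq_mul_left hn0 h)
      · have : k ≤ m := by omega
        calc n * k ≤ n * m := Nat.mul_le_mul_left n this
          _ = m * n := Nat.mul_comm _ _
          _ < m * n + 1 := by omega
    · intro l hl
      obtain ⟨_, hdvd⟩ := Finset.mem_filter.mp hl
      exact Nat.mul_div_cancel' hdvd
    · intro k _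
      exact Nat.mul_div_cancel_left _ hn0
    · intro l hl
      obtain ⟨_, hdvd⟩ := Finset.mem_filter.mp hl
      rw [hgc l, if_pos hdvd, abs_mul, hεabs, one_mul]
  -- real bound on the sum
  set E : ℝ := ((m : ℝ) + 1) * 2 ^ m * sv * A with hEdef
  have hE0 : (0:ℝ) ≤ E := by positivity
  have hsum_le : ((∑ k ∈ (Finset.range (m + 1)).erase k₀, |q.coeff k| : ℤ) : ℝ)
      ≤ (m : ℝ) * E := by
    have hk₀mem : k₀ ∈ Finset.range (m + 1) := Finset.mem_range.mpr (by omega)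
    have hcast : ((∑ k ∈ (Finset.range (m + 1)).erase k₀, |q.coeff k| : ℤ) : ℝ)
        = ∑ k ∈ (Finset.range (m + 1)).erase k₀, ((|q.coeff k| : ℤ) : ℝ) := by
      push_cast
      rfl
    rw [hcast]
    refine le_trans (Finset.sum_le_card_nsmul _ _ E ?_) ?_
    · intro k hk
      have hk1 := Finset.ne_of_mem_erase hk
      have hk2 := Finset.mem_range.mp (Finset.mem_of_mem_erase hk)
      exact hothers k (by omega) hk1
    · rw [Finset.card_erase_of_mem hk₀mem, Finset.card_range, nsmul_eq_mul]
      have : ((m + 1 - 1 : ℕ) : ℝ) = (m : ℝ) := by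
        push_cast [Nat.add_sub_cancel]
        ring
      rw [this]
  -- key numeric inequality
  have hKε : ((m:ℝ) + 1) * 2 ^ m * (4 * (m:ℝ) + 1) * ε₀ = 1 / 2 := by
    rw [hε₀def]
    have h2m : (0:ℝ) < 2 ^ m := by positivity
    field_simp
  have hE41 : (4 * (m:ℝ) + 1) * E ≤ A / 2 := by
    have h1 : (4 * (m:ℝ) + 1) * E = (((m:ℝ) + 1) * 2 ^ m * (4 * (m:ℝ) + 1) * sv) * A := by
      rw [hEdef]; ring
    have h2 : ((m:ℝ) + 1) * 2 ^ m * (4 * (m:ℝ) + 1) * sv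
        ≤ ((m:ℝ) + 1) * 2 ^ m * (4 * (m:ℝ) + 1) * ε₀ := by
      apply mul_le_mul_of_nonneg_left hsvε (by positivity)
    rw [h1]
    calc (((m:ℝ) + 1) * 2 ^ m * (4 * (m:ℝ) + 1) * sv) * A
        ≤ (((m:ℝ) + 1) * 2 ^ m * (4 * (m:ℝ) + 1) * ε₀) * A :=
          mul_le_mul_of_nonneg_right h2 hA0.le
      _ = (1 / 2) * A := by rw [hKε]
      _ = A / 2 := by ring
  -- conclude over ℤ
  have hmain_int : 12 + 4 * (∑ l ∈ (Finset.range (g.natDegree + 1)).erase L, |g.coeff l|)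
      ≤ g.coeff L := by
    have hreal : (12:ℝ) + 4 * ((∑ k ∈ (Finset.range (m + 1)).erase k₀, |q.coeff k| : ℤ) : ℝ)
        ≤ ((|c₀| : ℤ) : ℝ) := by
      have h1 : A - E ≤ ((|c₀| : ℤ) : ℝ) := hmainb
      have h2 : E ≤ (4 * (m:ℝ) + 1) * E := by nlinarith
      linarith [hsum_le]
    rw [hsum_eq, hcoefL]
    exact_mod_cast hreal
  refine ⟨g, L, hg0, hLg, hgaeval, ?_⟩
  omega
end

section
/- Let M ∈ Z^{m×m} be non-singular with no eigenvalue of modulus 1, let g(X) = Σ_{l=0}^{p−1} c_l X^l with g(M) = 0 and dominant coefficient c_L ≥ 4(C + Σ_{l≠L}|c_l|) where C = c_L − 4⌊c_L/4⌋, and set K = ⌊c_L/4⌋, D = [−3K,3K)^m ∩ Z^m, D' = [−2K,2K)^m ∩ Z^m, Q = [−1,1]^m ∩ Z^m. Then D + D ⊆ D' + 4K·Q, and for each w ∈ D+D there is a unique q ∈ Q with w − 4K·q ∈ D'. Moreover, for any choice of w_j ∈ D+D and the corresponding q_j ∈ Q, the vectors z_j = w_j − Σ_{l=0}^{p−1}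 c_l q_{j+L−l} belong to D. -/
open Matrix Polynomial BigOperators

theorem parallel_addition_digit_bounds {m : ℕ} (M : Matrix (Fin m) (Fin m) ℤ)
    (hM : M.det ≠ 0)
    (heig : ∀ z : ℂ, (M.map (Int.cast : ℤ → ℂ)).charpoly.IsRoot z → ‖z‖ ≠ 1)
    (g : Polynomial ℤ) (L : ℕ) (hgM : Polynomial.aeval M g = 0) (hL : L ≤ g.natDegree)
    (hdom : g.coeff L ≥ 4 * ((g.coeff L - 4 * (g.coeff L / 4)) +
        ∑ l ∈ (Finset.range (g.natDegree + 1)).erase L, |g.coeff l|))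
    (K : ℤ) (hK : K = g.coeff L / 4) (hK1 : 1 ≤ K)
    (D D' Q : Set (Fin m → ℤ))
    (hD : D = {v | ∀ i, -(3 * K) ≤ v i ∧ v i < 3 * K})
    (hD' : D' = {v | ∀ i, -(2 * K) ≤ v i ∧ v i < 2 * K})
    (hQ : Q = {v | ∀ i, -1 ≤ v i ∧ v i ≤ 1}) :
    (∀ w : Fin m → ℤ, (∃ a ∈ D, ∃ b ∈ D, w = a + b) →
        ∃! q : Fin m → ℤ, q ∈ Q ∧ w - (4 * K) • q ∈ D') ∧
    (∀ (w q : ℤ → Fin m → ℤ),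
        (∀ j, ∃ a ∈ D, ∃ b ∈ D, w j = a + b) →
        (∀ j, q j ∈ Q ∧ w j - (4 * K) • q j ∈ D') →
        ∀ j : ℤ,
          (w j - ∑ l ∈ Finset.range (g.natDegree + 1),
              g.coeff l • q (j + (L : ℤ) - (l : ℤ))) ∈ D) := by
  clear hM heig hgM
  subst hD hD' hQ
  set n := g.natDegree with hn
  set C : ℤ := g.coeff L - 4 * (g.coeff L / 4) with hC
  set S : ℤ := ∑ l ∈ (Finset.range (n + 1)).erase L, |g.coeff l| with hS
  have hCmod : C = g.coeff L % 4 := by rw [hC, Int.emod_def]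
  have hC0 : 0 ≤ C := by rw [hCmod]; exact Int.emod_nonneg _ (by norm_num)
  have hC3 : C < 4 := by rw [hCmod]; exact Int.emod_lt_of_pos _ (by norm_num)
  have hS0 : 0 ≤ S := Finset.sum_nonneg fun _ _ => abs_nonneg _
  have hcL : g.coeff L = 4 * K + C := by omega
  have hCS : C + S ≤ K := by omega
  constructor
  · rintro w ⟨a, ha, b, hb, rfl⟩
    simp only [Set.mem_setOf_eq] at ha hb
    refine ⟨fun i => if (a + b) i < -(2 * K) then -1 else
        if (a + b) i < 2 * K then 0 else 1, ⟨?_, ?_⟩, ?_⟩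
    · intro i
      dsimp only
      split_ifs <;> norm_num
    · intro i
      have hai := ha i
      have hbi := hb i
      simp only [Pi.sub_apply, Pi.smul_apply, Pi.add_apply, smul_eq_mul] at *
      split_ifs with h1 h2 <;> constructor <;> nlinarith
    · rintro q' ⟨hq'Q, hq'D'⟩
      simp only [Set.mem_setOf_eq, Pi.sub_apply, Pi.smul_apply, Pi.add_apply,
        smul_eq_mul] at hq'Q hq'D'
      funext i
      have h1 := hq'Q i
      have h2 := hq'D' i
      have hai := ha i
      have hbi := hb i
      have hcases : q' i = -1 ∨ q' i = 0 ∨ q' i = 1 := by omega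
      have ho : (a + b) i = a i + b i := rfl
      show q' i = if (a + b) i < -(2 * K) then -1 else if (a + b) i < 2 * K then 0 else 1
      rcases hcases with h | h | h <;> rw [h] at h2 <;> split_ifs <;> omega
  · intro w q hw hq j
    have hqD' := (hq j).2
    simp only [Set.mem_setOf_eq, Pi.sub_apply, Pi.smul_apply, smul_eq_mul] at hqD'
    intro i
    simp only [Pi.sub_apply, Finset.sum_apply, Pi.smul_apply, smul_eq_mul]
    have hLmem : L ∈ Finset.range (n + 1) := Finset.mem_range.mpr (by omega)
    have hsplit : ∑ l ∈ Finset.range (n + 1), g.coeff l * q (j + (L : ℤ) - (l : ℤ)) i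
        = g.coeff L * q j i +
          ∑ l ∈ (Finset.range (n + 1)).erase L, g.coeff l * q (j + (L : ℤ) - (l : ℤ)) i := by
      rw [← Finset.add_sum_erase _ _ hLmem, add_sub_cancel_right]
    rw [hsplit]
    set T : ℤ := ∑ l ∈ (Finset.range (n + 1)).erase L, g.coeff l * q (j + (L : ℤ) - (l : ℤ)) i
      with hT
    have hTS : |T| ≤ S := by
      refine (Finset.abs_sum_le_sum_abs _ _).trans ?_
      apply Finset.sum_le_sum
      intro l _
      rw [abs_mul]
      have hql := (hq (j + (L : ℤ) - (l : ℤ))).1 i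
      calc |g.coeff l| * |q (j + (L : ℤ) - (l : ℤ)) i| ≤ |g.coeff l| * 1 := by
            apply mul_le_mul_of_nonneg_left _ (abs_nonneg _)
            rw [abs_le]
            exact hql
        _ = |g.coeff l| := mul_one _
    have hB : |C * q j i| ≤ C := by
      rw [abs_mul, abs_of_nonneg hC0]
      have hql := (hq j).1 i
      calc C * |q j i| ≤ C * 1 := by
            apply mul_le_mul_of_nonneg_left _ hC0
            rw [abs_le]
            exact hql
        _ = C := mul_one _
    rw [abs_le] at hTS hB
    have hA := hqD' i
    rw [hcL]
    constructor <;> [linarith [hA.1, hTS.1, hB.1]; linarith [hA.2, hTS.2, hB.2]]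
end

section
/- Let M ∈ Z^{m×m} and let D ⊂ Z^m be a finite digit set containing 0 whose linear span is R^m. If addition in (M, D), i.e., a digit set conversion in base M from D+D to D, is computable by a p-local function, then no eigenvalue of M has modulus 1. -/
open Matrix BigOperators

def IsPLocal {m : ℕ} (p : ℕ)
    (φ : (ℤ → Fin m → ℤ) → (ℤ → Fin m → ℤ)) : Prop :=
  ∃ r t : ℕ, p = r + t + 1 ∧
    ∃ Φ : (Fin p → Fin m → ℤ) → (Fin m → ℤ),
      ∀ (u : ℤ → Fin m → ℤ) (j : ℤ),
        φ u j = Φ (fun k => u (j + (t : ℤ) - (k : ℤ)))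

noncomputable def IsDigitConversion {m : ℕ} (M : Matrix (Fin m) (Fin m) ℤ)
    (A B : Set (Fin m → ℤ)) (φ : (ℤ → Fin m → ℤ) → (ℤ → Fin m → ℤ)) : Prop :=
  ∀ u : ℤ → Fin m → ℤ, (∀ j, u j ∈ A) → {j | u j ≠ 0}.Finite →
    (∀ j, φ u j ∈ B) ∧ {j | φ u j ≠ 0}.Finite ∧
    ∑ᶠ j : ℤ, (mzpow (M.map (Int.cast : ℤ → ℚ)) j).mulVec (castQ (φ u j))
      = ∑ᶠ j : ℤ, (mzpow (M.map (Int.cast : ℤ → ℚ)) j).mulVec (castQ (u j))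

/-! ### Auxiliary machinery -/

/-- The linear functional on `ℚ^m` induced by a complex vector `v`. -/
noncomputable def gfun {m : ℕ} (v : Fin m → ℂ) (x : Fin m → ℚ) : ℂ :=
  ∑ i, v i * (x i : ℂ)

lemma castQ_zero {m : ℕ} : castQ (0 : Fin m → ℤ) = 0 := by
  funext i; simp [castQ]

lemma gfun_zero {m : ℕ} (v : Fin m → ℂ) : gfun v 0 = 0 := by simp [gfun]

lemma gfun_add {m : ℕ} (v : Fin m → ℂ) (x y : Fin m → ℚ) :
    gfun v (x + y) = gfun v x + gfun v y := by
  simp [gfun, mul_add, Finset.sum_add_distrib]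

lemma gfun_sum {m : ℕ} (v : Fin m → ℂ) (s : Finset ℤ) (f : ℤ → Fin m → ℚ) :
    gfun v (∑ j ∈ s, f j) = ∑ j ∈ s, gfun v (f j) := by
  simp only [gfun, Finset.sum_apply, Rat.cast_sum, Finset.mul_sum]
  exact Finset.sum_comm

lemma gfun_mulVec {m : ℕ} (M : Matrix (Fin m) (Fin m) ℤ) (v : Fin m → ℂ) (z : ℂ)
    (hv : ∀ j, ∑ i, (M i j : ℂ) * v i = z * v j) (x : Fin m → ℚ) :
    gfun v ((M.map (Int.cast : ℤ → ℚ)).mulVec x) = z * gfun v x := by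
  have key : ∀ i, (((M.map (Int.cast : ℤ → ℚ)).mulVec x i : ℚ) : ℂ)
      = ∑ j, (M i j : ℂ) * (x j : ℂ) := by
    intro i
    simp only [Matrix.mulVec, dotProduct, Matrix.map_apply]
    push_cast
    rfl
  calc gfun v ((M.map (Int.cast : ℤ → ℚ)).mulVec x)
      = ∑ i, ∑ j, v i * ((M i j : ℂ) * (x j : ℂ)) := by
        simp only [gfun, key, Finset.mul_sum]
    _ = ∑ j, ∑ i, v i * ((M i j : ℂ) * (x j : ℂ)) := Finset.sum_comm
    _ = ∑ j, (∑ i, (M i j : ℂ) * v i) * (x j : ℂ) := by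
        refine Finset.sum_congr rfl fun j _ => ?_
        rw [Finset.sum_mul]
        exact Finset.sum_congr rfl fun i _ => by ring
    _ = z * gfun v x := by
        simp only [hv, gfun, Finset.mul_sum]
        exact Finset.sum_congr rfl fun j _ => by ring

lemma gfun_pow_mulVec {m : ℕ} (A : Matrix (Fin m) (Fin m) ℚ) (v : Fin m → ℂ) (z : ℂ)
    (hA : ∀ x, gfun v (A.mulVec x) = z * gfun v x) :
    ∀ (k : ℕ) (x : Fin m → ℚ), gfun v ((A ^ k).mulVec x) = z ^ k * gfun v x := by
  intro k
  induction k with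
  | zero => intro x; simp [Matrix.one_mulVec]
  | succ k ih =>
    intro x
    rw [pow_succ', ← Matrix.mulVec_mulVec, hA, ih]
    ring

lemma gfun_mzpow_abs_le {m : ℕ} (A : Matrix (Fin m) (Fin m) ℚ) (v : Fin m → ℂ) (z : ℂ)
    (hz : ‖z‖ = 1)
    (hA : ∀ x, gfun v (A.mulVec x) = z * gfun v x) (j : ℤ) (x : Fin m → ℚ) :
    ‖gfun v ((mzpow A j).mulVec x)‖ ≤ ‖gfun v x‖ := by
  have hz0 : z ≠ 0 := by
    intro h; rw [h] at hz; simp at hz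
  unfold mzpow
  split_ifs with h
  · rw [gfun_pow_mulVec A v z hA, norm_mul, norm_pow, hz, one_pow, one_mul]
  · by_cases hdet : IsUnit A.det
    · have hinv : ∀ y, gfun v (A⁻¹.mulVec y) = z⁻¹ * gfun v y := by
        intro y
        have h2 := hA (A⁻¹.mulVec y)
        rw [Matrix.mulVec_mulVec, Matrix.mul_nonsing_inv A hdet, Matrix.one_mulVec] at h2
        rw [h2, inv_mul_cancel_left₀ hz0]
      rw [gfun_pow_mulVec A⁻¹ v z⁻¹ hinv, norm_mul, norm_pow, norm_inv, hz, inv_one,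
        one_pow, one_mul]
    · rw [Matrix.nonsing_inv_apply_not_isUnit A hdet, zero_pow, Matrix.zero_mulVec,
        gfun_zero, norm_zero]
      · positivity
      · omega

lemma linfunc_zero {m : ℕ} (D : Finset (Fin m → ℤ))
    (hspan : Submodule.span ℝ
        ((fun v : Fin m → ℤ => fun i => (v i : ℝ)) '' (D : Set (Fin m → ℤ)))
        = (⊤ : Submodule ℝ (Fin m → ℝ)))
    (c : Fin m → ℝ) (hc : ∀ d ∈ D, ∑ i, c i * (d i : ℝ) = 0) : ∀ i, c i = 0 := by
  classical
  intro i
  let L : (Fin m → ℝ) →ₗ[ℝ] ℝ :=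
    { toFun := fun x => ∑ i, c i * x i
      map_add' := fun x y => by simp [mul_add, Finset.sum_add_distrib]
      map_smul' := fun a x => by
        simp only [Pi.smul_apply, smul_eq_mul, RingHom.id_apply, Finset.mul_sum]
        exact Finset.sum_congr rfl fun i _ => by ring }
  have hker : Submodule.span ℝ
      ((fun v : Fin m → ℤ => fun i => (v i : ℝ)) '' (D : Set (Fin m → ℤ)))
      ≤ LinearMap.ker L := by
    rw [Submodule.span_le]
    rintro _ ⟨d', hd', rfl⟩
    simp only [SetLike.mem_coe, LinearMap.mem_ker]
    exact hc d' hd'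
  rw [hspan] at hker
  have h1 : L (Pi.single i 1) = 0 := hker Submodule.mem_top
  simpa [L, Pi.single_apply, mul_ite] using h1

lemma span_nonzero_digit {m : ℕ} (D : Finset (Fin m → ℤ))
    (hspan : Submodule.span ℝ
        ((fun v : Fin m → ℤ => fun i => (v i : ℝ)) '' (D : Set (Fin m → ℤ)))
        = (⊤ : Submodule ℝ (Fin m → ℝ)))
    (v : Fin m → ℂ) (hvne : v ≠ 0) :
    ∃ d ∈ D, gfun v (castQ d) ≠ 0 := by
  by_contra hcon
  push_neg at hcon
  apply hvne
  have hre : ∀ d ∈ D, ∑ i, (v i).re * (d i : ℝ) = 0 := by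
    intro d hd
    have h := congrArg Complex.re (hcon d hd)
    rw [gfun, Complex.re_sum] at h
    simpa [castQ, Complex.mul_re] using h
  have him : ∀ d ∈ D, ∑ i, (v i).im * (d i : ℝ) = 0 := by
    intro d hd
    have h := congrArg Complex.im (hcon d hd)
    rw [gfun, Complex.im_sum] at h
    simpa [castQ, Complex.mul_im] using h
  funext i
  exact Complex.ext (linfunc_zero D hspan (fun i => (v i).re) hre i)
    (linfunc_zero D hspan (fun i => (v i).im) him i)

/-- The sequence obtained from a single digit `d` by repeatedly doubling and converting. -/
def iterSeq {m : ℕ} (φ : (ℤ → Fin m → ℤ) → (ℤ → Fin m → ℤ)) (d : Fin m → ℤ) :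
    ℕ → ℤ → Fin m → ℤ
  | 0 => fun j => if j = 0 then d else 0
  | n + 1 => φ (fun j => iterSeq φ d n j + iterSeq φ d n j)

/-- The value represented by a digit sequence. -/
noncomputable def valQ {m : ℕ} (M : Matrix (Fin m) (Fin m) ℤ) (u : ℤ → Fin m → ℤ) :
    Fin m → ℚ :=
  ∑ᶠ j : ℤ, (mzpow (M.map (Int.cast : ℤ → ℚ)) j).mulVec (castQ (u j))

theorem parallel_addition_no_unit_circle_eigenvalue {m : ℕ}
    (M : Matrix (Fin m) (Fin m) ℤ) (D : Finset (Fin m → ℤ))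
    (h0 : (0 : Fin m → ℤ) ∈ D)
    (hspan : Submodule.span ℝ
        ((fun v : Fin m → ℤ => fun i => (v i : ℝ)) '' (D : Set (Fin m → ℤ)))
        = (⊤ : Submodule ℝ (Fin m → ℝ)))
    (hpar : ∃ (p : ℕ) (φ : (ℤ → Fin m → ℤ) → (ℤ → Fin m → ℤ)),
        IsPLocal p φ ∧
        IsDigitConversion M {w | ∃ a ∈ D, ∃ b ∈ D, w = a + b} (D : Set (Fin m → ℤ)) φ) :
    ∀ z : ℂ, (M.map (Int.cast : ℤ → ℂ)).charpoly.IsRoot z → ‖z‖ ≠ 1 := by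
  classical
  intro z hz hz1
  obtain ⟨p, φ, ⟨r, t, hp, Φ, hΦ⟩, hconv⟩ := hpar
  -- Step 1: extract a left eigenvector for `z`.
  have hdet : (z • (1 : Matrix (Fin m) (Fin m) ℂ) - M.map (Int.cast : ℤ → ℂ)).det = 0 := by
    have h1 : (M.map (Int.cast : ℤ → ℂ)).charpoly.eval z
        = (z • (1 : Matrix (Fin m) (Fin m) ℂ) - M.map (Int.cast : ℤ → ℂ)).det := by
      rw [Matrix.charpoly, ← Polynomial.coe_evalRingHom, RingHom.map_det]
      congr 1
      ext i j
      by_cases hij : i = j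
      · subst hij
        simp [Matrix.charmatrix_apply_eq, Matrix.smul_apply, Matrix.one_apply]
      · simp [Matrix.charmatrix_apply_ne _ _ _ hij, Matrix.one_apply, hij]
    rw [← h1]; exact hz
  have hdetT : (z • (1 : Matrix (Fin m) (Fin m) ℂ) - (M.map (Int.cast : ℤ → ℂ))ᵀ).det = 0 := by
    rw [← Matrix.det_transpose, Matrix.transpose_sub, Matrix.transpose_smul,
      Matrix.transpose_one] at hdet
    exact hdet
  obtain ⟨v, hvne, hveq⟩ := Matrix.exists_mulVec_eq_zero_iff.mpr hdetT
  have hMv : (M.map (Int.cast : ℤ → ℂ))ᵀ.mulVec v = z • v := by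
    rw [Matrix.sub_mulVec, Matrix.smul_mulVec, Matrix.one_mulVec, sub_eq_zero] at hveq
    exact hveq.symm
  have hv : ∀ j, ∑ i, (M i j : ℂ) * v i = z * v j := by
    intro j
    have h2 := congrFun hMv j
    simpa [Matrix.mulVec, dotProduct, Matrix.transpose_apply, Matrix.map_apply,
      Pi.smul_apply, smul_eq_mul] using h2
  have hA : ∀ x, gfun v ((M.map (Int.cast : ℤ → ℚ)).mulVec x) = z * gfun v x :=
    gfun_mulVec M v z hv
  -- Step 2: a digit not annihilated by the eigenfunctional.
  obtain ⟨d, hdD, hgd⟩ := span_nonzero_digit D hspan v hvne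
  have hgd0 : 0 < ‖gfun v (castQ d)‖ := norm_pos_iff.mpr hgd
  -- Step 3: the local function sends the zero window to zero.
  have hΦ0 : Φ (fun _ => 0) = 0 := by
    obtain ⟨-, hfin, -⟩ := hconv (fun _ => 0) (fun j => ⟨0, h0, 0, h0, by simp⟩) (by simp)
    by_contra hne0
    have huniv : {j : ℤ | φ (fun _ => 0) j ≠ 0} = Set.univ := by
      ext j
      simp only [Set.mem_setOf_eq, Set.mem_univ, iff_true]
      rw [hΦ]
      exact hne0
    rw [huniv] at hfin
    exact Set.infinite_univ hfin
  -- Step 4: support propagation for the local function.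
  have hprop : ∀ (u : ℤ → Fin m → ℤ) (a b : ℤ), (∀ j, u j ≠ 0 → a ≤ j ∧ j ≤ b) →
      ∀ j, φ u j ≠ 0 → a - p ≤ j ∧ j ≤ b + p := by
    intro u a b hu j hj
    by_contra hout
    apply hj
    rw [hΦ u j]
    have hwin : (fun k : Fin p => u (j + (t : ℤ) - (k : ℤ))) = fun _ => 0 := by
      funext k
      by_contra hk0
      have hk := hu _ hk0
      have h2 : ((k : ℤ)) < (p : ℤ) := by
        have : ((k.val : ℕ) : ℤ) < (p : ℤ) := by exact_mod_cast k.isLt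
        exact this
      have h3 : (0 : ℤ) ≤ ((k : ℤ)) := by
        have : (0 : ℤ) ≤ ((k.val : ℕ) : ℤ) := Int.natCast_nonneg _
        exact this
      omega
    rw [hwin, hΦ0]
  -- Step 5: the iterated doubling sequence and its invariants.
  have hkey : ∀ n : ℕ, (∀ j, iterSeq φ d n j ∈ D) ∧
      (∀ j, iterSeq φ d n j ≠ 0 → -((p : ℤ) * n) ≤ j ∧ j ≤ (p : ℤ) * n) ∧
      gfun v (valQ M (iterSeq φ d n)) = 2 ^ n * gfun v (castQ d) := by
    intro n
    induction n with
    | zero =>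
      refine ⟨?_, ?_, ?_⟩
      · intro j
        show (if j = 0 then d else 0) ∈ D
        split_ifs
        · exact hdD
        · exact h0
      · intro j hj
        by_cases hj0 : j = 0
        · subst hj0; simp
        · exact absurd (if_neg hj0) hj
      · have hval0 : valQ M (iterSeq φ d 0) = castQ d := by
          have h1 : valQ M (iterSeq φ d 0)
              = (mzpow (M.map (Int.cast : ℤ → ℚ)) 0).mulVec (castQ (iterSeq φ d 0 0)) := by
            apply finsum_eq_single
            intro j hj
            show (mzpow (M.map (Int.cast : ℤ → ℚ)) j).mulVec
              (castQ (if j = 0 then d else 0)) = 0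
            rw [if_neg hj, castQ_zero, Matrix.mulVec_zero]
          rw [h1]
          show (mzpow (M.map (Int.cast : ℤ → ℚ)) 0).mulVec
            (castQ (if (0 : ℤ) = 0 then d else 0)) = castQ d
          rw [if_pos rfl]
          have h2 : mzpow (M.map (Int.cast : ℤ → ℚ)) 0 = 1 := by simp [mzpow]
          rw [h2, Matrix.one_mulVec]
        rw [hval0]; ring
    | succ n ih =>
      obtain ⟨hmem, hsupp, hval⟩ := ih
      have hWfin : {j : ℤ | iterSeq φ d n j ≠ 0}.Finite := by
        apply Set.Finite.subset (Set.finite_Icc (-((p : ℤ) * n)) ((p : ℤ) * n))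
        intro j hj
        exact Set.mem_Icc.mpr (hsupp j hj)
      have hwu : ∀ j, iterSeq φ d n j = 0 → iterSeq φ d n j + iterSeq φ d n j = 0 := by
        intro j h; rw [h]; simp
      have huA : ∀ j, iterSeq φ d n j + iterSeq φ d n j
          ∈ {w : Fin m → ℤ | ∃ a ∈ D, ∃ b ∈ D, w = a + b} :=
        fun j => ⟨iterSeq φ d n j, hmem j, iterSeq φ d n j, hmem j, rfl⟩
      have hufin : {j : ℤ | (fun j => iterSeq φ d n j + iterSeq φ d n j) j ≠ 0}.Finite := by
        apply hWfin.subset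
        intro j hj
        simp only [Set.mem_setOf_eq] at hj ⊢
        intro h
        exact hj (hwu j h)
      obtain ⟨hmem', hfin', hsum'⟩ :=
        hconv (fun j => iterSeq φ d n j + iterSeq φ d n j) huA hufin
      have husupp : ∀ j, (fun j => iterSeq φ d n j + iterSeq φ d n j) j ≠ 0 →
          -((p : ℤ) * n) ≤ j ∧ j ≤ (p : ℤ) * n := by
        intro j hj
        refine hsupp j ?_
        intro h
        exact hj (hwu j h)
      refine ⟨?_, ?_, ?_⟩
      · intro j
        exact hmem' j
      · intro j hj
        have hb := hprop _ _ _ husupp j hj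
        push_cast
        push_cast at hb
        constructor <;> linarith [hb.1, hb.2]
      · have hFfin : (Function.support fun j : ℤ =>
            (mzpow (M.map (Int.cast : ℤ → ℚ)) j).mulVec (castQ (iterSeq φ d n j))).Finite := by
          apply hWfin.subset
          intro j hj
          simp only [Function.mem_support] at hj
          simp only [Set.mem_setOf_eq]
          intro h
          apply hj
          rw [h, castQ_zero, Matrix.mulVec_zero]
        have hvalu : valQ M (fun j => iterSeq φ d n j + iterSeq φ d n j)
            = valQ M (iterSeq φ d n) + valQ M (iterSeq φ d n) := by
          have hpt : (fun j : ℤ => (mzpow (M.map (Int.cast : ℤ → ℚ)) j).mulVec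
                (castQ (iterSeq φ d n j + iterSeq φ d n j)))
              = fun j : ℤ => (mzpow (M.map (Int.cast : ℤ → ℚ)) j).mulVec
                  (castQ (iterSeq φ d n j))
                + (mzpow (M.map (Int.cast : ℤ → ℚ)) j).mulVec (castQ (iterSeq φ d n j)) := by
            funext j
            rw [castQ_add, Matrix.mulVec_add]
          rw [valQ, hpt, finsum_add_distrib hFfin hFfin]
          rfl
        have hveq2 : valQ M (iterSeq φ d (n + 1))
            = valQ M (fun j => iterSeq φ d n j + iterSeq φ d n j) := by
          show valQ M (φ fun j => iterSeq φ d n j + iterSeq φ d n j) = _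
          exact hsum'
        rw [hveq2, hvalu, gfun_add, hval]
        ring
  -- Step 6: the uniform bound on the eigenfunctional of the values.
  have hDne : D.Nonempty := ⟨0, h0⟩
  set C : ℝ := D.sup' hDne (fun d' => ‖gfun v (castQ d')‖) with hCdef
  have hC : ∀ d' ∈ D, ‖gfun v (castQ d')‖ ≤ C := by
    intro d' hd'
    rw [hCdef]
    exact Finset.le_sup' (fun d' => ‖gfun v (castQ d')‖) hd'
  have hCpos : 0 < C := lt_of_lt_of_le hgd0 (hC d hdD)
  have hbound : ∀ n : ℕ,
      2 ^ n * ‖gfun v (castQ d)‖ ≤ (2 * (p : ℝ) * n + 1) * C := by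
    intro n
    obtain ⟨hmem, hsupp, hval⟩ := hkey n
    have hsub : (Function.support fun j : ℤ =>
        (mzpow (M.map (Int.cast : ℤ → ℚ)) j).mulVec (castQ (iterSeq φ d n j)))
        ⊆ (Finset.Icc (-((p : ℤ) * n)) ((p : ℤ) * n) : Finset ℤ) := by
      intro j hj
      simp only [Function.mem_support] at hj
      have hwj : iterSeq φ d n j ≠ 0 := by
        intro h
        apply hj
        rw [h, castQ_zero, Matrix.mulVec_zero]
      simp only [Finset.coe_Icc, Set.mem_Icc]
      exact hsupp j hwj
    have hvn : valQ M (iterSeq φ d n)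
        = ∑ j ∈ Finset.Icc (-((p : ℤ) * n)) ((p : ℤ) * n),
            (mzpow (M.map (Int.cast : ℤ → ℚ)) j).mulVec (castQ (iterSeq φ d n j)) :=
      finsum_eq_sum_of_support_subset _ hsub
    have hcard : ((Finset.Icc (-((p : ℤ) * n)) ((p : ℤ) * n)).card : ℝ)
        = 2 * (p : ℝ) * n + 1 := by
      have h1 : (Finset.Icc (-((p : ℤ) * n)) ((p : ℤ) * n)).card
          = (2 * (p : ℤ) * n + 1).toNat := by
        rw [Int.card_Icc]
        congr 1
        ring
      rw [h1]
      have h2 : (0 : ℤ) ≤ 2 * (p : ℤ) * n + 1 := by positivity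
      have h3 : ((2 * (p : ℤ) * n + 1).toNat : ℤ) = 2 * (p : ℤ) * n + 1 :=
        Int.toNat_of_nonneg h2
      have h4 : (((2 * (p : ℤ) * n + 1).toNat : ℕ) : ℝ) = 2 * (p : ℝ) * n + 1 := by
        exact_mod_cast congrArg (fun x : ℤ => (x : ℝ)) h3
      exact h4
    calc 2 ^ n * ‖gfun v (castQ d)‖
        = ‖gfun v (valQ M (iterSeq φ d n))‖ := by
          rw [hval, norm_mul, norm_pow, Complex.norm_two]
      _ = ‖∑ j ∈ Finset.Icc (-((p : ℤ) * n)) ((p : ℤ) * n),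
            gfun v ((mzpow (M.map (Int.cast : ℤ → ℚ)) j).mulVec (castQ (iterSeq φ d n j)))‖ := by
          rw [hvn, gfun_sum]
      _ ≤ ∑ j ∈ Finset.Icc (-((p : ℤ) * n)) ((p : ℤ) * n),
            ‖gfun v ((mzpow (M.map (Int.cast : ℤ → ℚ)) j).mulVec
              (castQ (iterSeq φ d n j)))‖ := norm_sum_le _ _
      _ ≤ ∑ _j ∈ Finset.Icc (-((p : ℤ) * n)) ((p : ℤ) * n), C := by
          refine Finset.sum_le_sum fun j _ => ?_
          exact le_trans (gfun_mzpow_abs_le _ v z hz1 hA j _) (hC _ (hmem j))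
      _ = ((Finset.Icc (-((p : ℤ) * n)) ((p : ℤ) * n)).card : ℝ) * C := by
          rw [Finset.sum_const, nsmul_eq_mul]
      _ = (2 * (p : ℝ) * n + 1) * C := by rw [hcard]
  -- Step 7: exponential growth beats the linear bound.
  set gd0 : ℝ := ‖gfun v (castQ d)‖ with hgd0def
  set K : ℝ := (2 * (p : ℝ) + 1) * C with hKdef
  have hKpos : 0 < K := by positivity
  have hlin : ∀ n : ℕ, 1 ≤ n → 2 ^ n * gd0 ≤ K * n := by
    intro n hn
    refine le_trans (hbound n) ?_
    have hn1 : (1 : ℝ) ≤ n := by exact_mod_cast hn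
    have h2 : 2 * (p : ℝ) * n + 1 ≤ (2 * (p : ℝ) + 1) * n := by nlinarith
    calc (2 * (p : ℝ) * n + 1) * C ≤ ((2 * (p : ℝ) + 1) * n) * C :=
          mul_le_mul_of_nonneg_right h2 (le_of_lt hCpos)
      _ = K * n := by rw [hKdef]; ring
  have hlo : ((↑) : ℕ → ℝ) =o[Filter.atTop] fun n : ℕ => (2 : ℝ) ^ n :=
    isLittleO_coe_const_pow_of_one_lt one_lt_two
  have heps : (0 : ℝ) < gd0 / (2 * K) := by positivity
  obtain ⟨N, hN⟩ := Filter.eventually_atTop.mp (hlo.def heps)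
  have hn1 : 1 ≤ max N 1 := le_max_right _ _
  have h2 := hN (max N 1) (le_max_left _ _)
  set n := max N 1 with hndef
  have hnorm1 : ‖((n : ℕ) : ℝ)‖ = (n : ℝ) := Real.norm_natCast n
  have hnorm2 : ‖(2 : ℝ) ^ n‖ = 2 ^ n := by
    rw [Real.norm_eq_abs, abs_of_nonneg (by positivity)]
  rw [hnorm1, hnorm2] at h2
  have hexp := hlin n hn1
  have hpow : (0 : ℝ) < 2 ^ n := by positivity
  have hfin2 : K * (n : ℝ) ≤ gd0 * 2 ^ n / 2 := by
    calc K * (n : ℝ) ≤ K * (gd0 / (2 * K) * 2 ^ n) :=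
          mul_le_mul_of_nonneg_left h2 (le_of_lt hKpos)
      _ = gd0 * 2 ^ n / 2 := by field_simp
  nlinarith [hexp, hfin2, hpow, hgd0]
end
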